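/- arXiv:1010.5212 — 3 statements merged into one kernel-verified Lean document; each statement's English description precedes it below -/
import Mathlib

section
/- There exists a c.e. set A ⊆ ℕ of density 1 such that no computable subset of A has density 1. -/
open Filter

open scoped Classical in
/-- `ρ_n(A) = |A ∩ {0,…,n}| / (n+1)`. -/
noncomputable def partialDensity (A : Set ℕ) (n : ℕ) : ℝ :=
  ((Finset.range (n + 1)).filter (· ∈ A)).card / (n + 1)

/-- The upper density of `A`: `limsup_n ρ_n(A)`. -/
noncomputable def upperDensity (A : Set ℕ) : ℝ :=
  Filter.limsup (partialDensity A) Filter.atTop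

/-- `A` has asymptotic density `r`: `ρ_n(A) → r`. -/
def HasDensity (A : Set ℕ) (r : ℝ) : Prop :=
  Filter.Tendsto (partialDensity A) Filter.atTop (nhds r)

open scoped Classical in
/-- The characteristic function of `A` (with values in `{0,1} ⊆ ℕ`). -/
noncomputable def charFun (A : Set ℕ) : ℕ → ℕ := fun n => if n ∈ A then 1 else 0

/-- `Φ` is a generic description of `A`: `Φ(x) = χ_A(x)` whenever `Φ(x)` is defined,
and the domain of `Φ` has density 1. -/
def IsGenericDescription (Φ : ℕ →. ℕ) (A : Set ℕ) : Prop :=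
  (∀ x m, m ∈ Φ x → m = charFun A x) ∧ HasDensity {x | (Φ x).Dom} 1

/-- `A` is generically computable: some partial computable function is a generic
description of `A`. -/
def GenericallyComputable (A : Set ℕ) : Prop :=
  ∃ Φ : ℕ →. ℕ, Partrec Φ ∧ IsGenericDescription Φ A

/-- `A` is computably enumerable: `A` is the domain of a partial computable function. -/
def CE (A : Set ℕ) : Prop :=
  ∃ f : ℕ →. ℕ, Partrec f ∧ A = {x | (f x).Dom}

/-- `A` is a computable set. -/
def ComputableSet (A : Set ℕ) : Prop := ComputablePred (· ∈ A)

/-- `A` is immune: infinite, with no infinite c.e. subset. -/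
def Immune (A : Set ℕ) : Prop :=
  A.Infinite ∧ ∀ W : Set ℕ, CE W → W.Infinite → ¬W ⊆ A

/-- `A` is bi-immune: both `A` and its complement are immune. -/
def BiImmune (A : Set ℕ) : Prop := Immune A ∧ Immune Aᶜ

/-- `A` and `B` are generically similar: their symmetric difference has density 0. -/
def GenericallySimilar (A B : Set ℕ) : Prop := HasDensity (symmDiff A B) 0

/-- `A` is coarsely computable: generically similar to a computable set. -/
def CoarselyComputable (A : Set ℕ) : Prop :=
  ∃ C : Set ℕ, ComputableSet C ∧ GenericallySimilar A C

/-- `R_k = {m : 2^k ∣ m, 2^(k+1) ∤ m}`. -/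
def Rset (k : ℕ) : Set ℕ := {m | 2 ^ k ∣ m ∧ ¬2 ^ (k + 1) ∣ m}

/-- `R(A) = ⋃_{n ∈ A} R_n`. -/
def RofSet (A : Set ℕ) : Set ℕ := ⋃ n ∈ A, Rset n

/-- Partial functions `ℕ →. ℕ` computable relative to a (total) oracle `O : ℕ → ℕ`. -/
inductive RecursiveIn' (O : ℕ → ℕ) : (ℕ →. ℕ) → Prop
  | zero : RecursiveIn' O (pure 0)
  | succ : RecursiveIn' O fun n => Part.some (n + 1)
  | left : RecursiveIn' O fun n => Part.some (Nat.unpair n).1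
  | right : RecursiveIn' O fun n => Part.some (Nat.unpair n).2
  | oracle : RecursiveIn' O fun n => Part.some (O n)
  | pair {f g : ℕ →. ℕ} : RecursiveIn' O f → RecursiveIn' O g →
      RecursiveIn' O fun n => Nat.pair <$> f n <*> g n
  | comp {f g : ℕ →. ℕ} : RecursiveIn' O f → RecursiveIn' O g →
      RecursiveIn' O fun n => g n >>= f
  | prec {f g : ℕ →. ℕ} : RecursiveIn' O f → RecursiveIn' O g →
      RecursiveIn' O (Nat.unpaired fun a n =>
        n.rec (f a) fun y IH => do let i ← IH; g (Nat.pair a (Nat.pair y i)))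
  | rfind {f : ℕ →. ℕ} : RecursiveIn' O f →
      RecursiveIn' O fun a => Nat.rfind fun n => (fun m => m = 0) <$> f (Nat.pair a n)

/-- `A ≤_T B`: the characteristic function of `A` is computable relative to `B`. -/
def TuringReducible' (A B : Set ℕ) : Prop :=
  RecursiveIn' (charFun B) fun n => Part.some (charFun A n)

/-- `A ≡_T B`. -/
def TuringEquivalent' (A B : Set ℕ) : Prop :=
  TuringReducible' A B ∧ TuringReducible' B A


open Nat.Partrec (Code)
open Nat.Partrec.Code

namespace S14

def cde (e : ℕ) : Code := Denumerable.ofNat Code e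

def chk1 (e s x : ℕ) : Bool := decide (evaln s (cde e) x = some 1)
def chkD (e s x : ℕ) : Bool := (evaln s (cde e) x).isSome

def bAll (p : ℕ → Bool) : ℕ → Bool
  | 0 => true
  | k+1 => bAll p k && p k

def bFind (p : ℕ → Bool) : ℕ → Option ℕ
  | 0 => none
  | k+1 => (bFind p k) <|> (bif p k then some k else none)

lemma bAll_iff (p : ℕ → Bool) : ∀ k, bAll p k = true ↔ ∀ i < k, p i = true := by
  intro k
  induction k with
  | zero => simp [bAll]
  | succ k ih =>
    simp only [bAll, Bool.and_eq_true, ih]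
    constructor
    · rintro ⟨h1, h2⟩ i hi
      rcases Nat.lt_succ_iff_lt_or_eq.1 hi with h | h
      · exact h1 i h
      · subst h; exact h2
    · intro h; exact ⟨fun i hi => h i (Nat.lt_succ_of_lt hi), h k (Nat.lt_succ_self k)⟩

lemma bFind_some {p : ℕ → Bool} {k i : ℕ} (h : bFind p k = some i) :
    i < k ∧ p i = true := by
  induction k with
  | zero => simp [bFind] at h
  | succ k ih =>
    simp only [bFind] at h
    rcases hb : bFind p k with _ | j
    · rw [hb] at h
      simp only [HOrElse.hOrElse, OrElse.orElse, Option.orElse_none] at h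
      cases hp : p k <;> rw [hp] at h <;> simp at h
      · subst h; exact ⟨Nat.lt_succ_self k, hp⟩
    · rw [hb] at h
      simp only [HOrElse.hOrElse, OrElse.orElse, Option.orElse_some] at h
      cases h
      obtain ⟨h1, h2⟩ := ih hb
      exact ⟨Nat.lt_succ_of_lt h1, h2⟩

lemma bFind_eq_none {p : ℕ → Bool} {k : ℕ} (h : ∀ i < k, p i ≠ true) :
    bFind p k = none := by
  induction k with
  | zero => rfl
  | succ k ih =>
    simp only [bFind]
    rw [ih (fun i hi => h i (Nat.lt_succ_of_lt hi))]
    have := h k (Nat.lt_succ_self k)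
    cases hp : p k
    · rfl
    · exact absurd hp this

lemma bFind_isSome {p : ℕ → Bool} {k i : ℕ} (hi : i < k) (hp : p i = true) :
    ∃ j, bFind p k = some j := by
  rcases h : bFind p k with _ | j
  · exfalso
    induction k with
    | zero => omega
    | succ k ih =>
      simp only [bFind] at h
      rcases hb : bFind p k with _ | j
      · rw [hb] at h
        simp only [HOrElse.hOrElse, OrElse.orElse, Option.orElse_none] at h
        rcases Nat.lt_succ_iff_lt_or_eq.1 hi with h' | h'
        · exact ih h' hb
        · subst h'; rw [hp] at h; simp at h
      · rw [hb] at h; simp at h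
  · exact ⟨j, rfl⟩

def stepf (e s st : ℕ) : ℕ :=
  if st % 2 = 1 then st
  else
    match bFind (fun i => chk1 e (s+1) (2 ^ (st/2) + i)) (2 ^ (st/2 - e)) with
    | some i => 2 * (2 ^ (st/2) + i) + 1
    | none =>
        bif bAll (fun i => chkD e (s+1) (2 ^ (st/2) + i)) (2 ^ (st/2 - e)) then
          2 * (s + e + 2)
        else st

def stt (e : ℕ) : ℕ → ℕ
  | 0 => 2 * (e + 1)
  | s+1 => stepf e s (stt e s)

def Act (e s j : ℕ) : Prop := stt e s = 2 * j
def Wn (e s w : ℕ) : Prop := stt e s = 2 * w + 1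
def Iv (e j x : ℕ) : Prop := 2 ^ j ≤ x ∧ x < 2 ^ j + 2 ^ (j - e)
def Holds (e x s : ℕ) : Prop := (∃ j, Act e s j ∧ Iv e j x) ∨ (∃ w, Wn e s w ∧ x = w)

lemma act_zero (e : ℕ) : Act e 0 (e+1) := rfl

lemma wn_step {e s w : ℕ} (h : Wn e s w) : Wn e (s+1) w := by
  unfold Wn at *
  show stepf e s (stt e s) = _
  rw [h] at *
  unfold stepf
  simp [Nat.mul_add_mod]

lemma wn_persist {e s w t : ℕ} (h : Wn e s w) (ht : s ≤ t) : Wn e t w := by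
  induction t with
  | zero => exact (Nat.le_zero.1 ht ▸ h : Wn e 0 w)
  | succ t ih =>
    rcases Nat.le_succ_iff.1 ht with h' | h'
    · exact wn_step (ih h')
    · subst h'; exact h

lemma step_cases {e s j : ℕ} (h : Act e s j) :
    Act e (s+1) j
    ∨ (Act e (s+1) (s+e+2) ∧ ∀ x, Iv e j x → ∃ v, evaln (s+1) (cde e) x = some v ∧ v ≠ 1)
    ∨ (∃ w, Wn e (s+1) w ∧ Iv e j w ∧ evaln (s+1) (cde e) w = some 1) := by
  unfold Act Wn at *
  have hst : stt e (s+1) = stepf e s (stt e s) := rfl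
  rw [h] at hst
  unfold stepf at hst
  have hmod : 2 * j % 2 = 0 := Nat.mul_mod_right 2 j
  rw [if_neg (by omega)] at hst
  have hdiv : 2 * j / 2 = j := by omega
  rw [hdiv] at hst
  rcases hb : bFind (fun i => chk1 e (s+1) (2 ^ j + i)) (2 ^ (j - e)) with _ | i
  · rw [hb] at hst
    rcases ha : bAll (fun i => chkD e (s+1) (2 ^ j + i)) (2 ^ (j - e)) with _ | _
    · rw [ha] at hst
      left; exact hst
    · rw [ha] at hst
      right; left
      refine ⟨hst, ?_⟩
      rintro x ⟨hx1, hx2⟩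
      have hiv : x - 2 ^ j < 2 ^ (j - e) := by omega
      have hd : chkD e (s+1) (2 ^ j + (x - 2 ^ j)) = true :=
        (bAll_iff _ _).1 ha _ hiv
      have hx : 2 ^ j + (x - 2 ^ j) = x := by omega
      rw [hx] at hd
      unfold chkD at hd
      rcases Option.isSome_iff_exists.1 hd with ⟨v, hv⟩
      refine ⟨v, hv, ?_⟩
      intro hv1
      subst hv1
      have h1 : chk1 e (s+1) (2 ^ j + (x - 2 ^ j)) = true := by
        unfold chk1; rw [hx, hv]; simp
      have := bFind_isSome (p := fun i => chk1 e (s+1) (2 ^ j + i)) hiv h1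
      rw [hb] at this
      simp at this
  · rw [hb] at hst
    obtain ⟨hi, hp⟩ := bFind_some hb
    unfold chk1 at hp
    right; right
    refine ⟨2 ^ j + i, hst, ⟨Nat.le_add_right _ _, by omega⟩, by simpa using hp⟩

lemma act_not_wn {e s j w : ℕ} (h1 : Act e s j) (h2 : Wn e s w) : False := by
  unfold Act Wn at *; omega

lemma act_uniq {e s j j' : ℕ} (h1 : Act e s j) (h2 : Act e s j') : j = j' := by
  unfold Act at *; omega

lemma wn_uniq {e s w w' : ℕ} (h1 : Wn e s w) (h2 : Wn e s w') : w = w' := by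
  unfold Wn at *; omega

lemma act_or_wn (e s : ℕ) : (∃ j, Act e s j) ∨ (∃ w, Wn e s w) := by
  rcases Nat.even_or_odd (stt e s) with ⟨k, hk⟩ | ⟨k, hk⟩
  · left; exact ⟨stt e s / 2, by unfold Act; omega⟩
  · right; exact ⟨stt e s / 2, by unfold Wn; omega⟩

lemma act_bounds {e s j : ℕ} (h : Act e s j) : e + 1 ≤ j ∧ j ≤ s + e + 1 := by
  induction s generalizing j with
  | zero =>
    have := act_uniq (act_zero e) h
    omega
  | succ s ih =>
    rcases act_or_wn e s with ⟨j0, hj0⟩ | ⟨w, hw⟩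
    · rcases step_cases hj0 with h1 | ⟨h1, _⟩ | ⟨w, h1, _⟩
      · have := act_uniq h1 h
        have := ih hj0
        omega
      · have := act_uniq h1 h
        omega
      · exact absurd h1 (fun h1 => act_not_wn h h1)
    · exact absurd (wn_step hw) (fun h1 => act_not_wn h h1)

lemma act_back {e t j : ℕ} (h : Act e t j) : ∀ s ≤ t, Act e s j ∨ s < 2 ^ j := by
  induction t generalizing j with
  | zero =>
    intro s hs
    have hs0 : s = 0 := Nat.le_zero.1 hs
    subst hs0; exact Or.inl h
  | succ t ih =>
    intro s hs
    rcases act_or_wn e t with ⟨j0, hj0⟩ | ⟨w, hw⟩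
    · rcases step_cases hj0 with h1 | ⟨h1, _⟩ | ⟨w, h1, _⟩
      · have hjj : j = j0 := act_uniq h h1
        subst hjj
        rcases Nat.le_succ_iff.1 hs with h' | h'
        · exact ih hj0 s h'
        · subst h'; exact Or.inl h
      · have hj : j = t + e + 2 := act_uniq h h1
        right
        subst hj
        have : t + e + 2 < 2 ^ (t + e + 2) := Nat.lt_two_pow_self
        omega
      · exact absurd h1 (fun h1 => act_not_wn h h1)
    · exact absurd (wn_step hw) (fun h1 => act_not_wn h h1)

lemma act_mono_step {e s j j' : ℕ} (h : Act e s j) (h' : Act e (s+1) j') : j ≤ j' := by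
  rcases step_cases h with h1 | ⟨h1, _⟩ | ⟨w, h1, _⟩
  · have := act_uniq h' h1; omega
  · have := act_uniq h' h1
    have := act_bounds h
    omega
  · exact absurd h1 (fun h1 => act_not_wn h' h1)

lemma act_mono {e s t j j' : ℕ} (hst : s ≤ t) (h : Act e s j) (h' : Act e t j') :
    j ≤ j' := by
  induction t generalizing j' with
  | zero =>
    have : s = 0 := Nat.le_zero.1 hst
    subst this
    have := act_uniq h h'; omega
  | succ t ih =>
    rcases Nat.le_succ_iff.1 hst with h2 | h2
    · rcases act_or_wn e t with ⟨j0, hj0⟩ | ⟨w, hw⟩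
      · exact le_trans (ih h2 hj0) (act_mono_step hj0 h')
      · exact absurd (wn_step hw) (fun h1 => act_not_wn h' h1)
    · subst h2
      have := act_uniq h h'; omega

lemma wn_origin {e t w : ℕ} (h : Wn e t w) :
    ∃ s j, Act e s j ∧ Wn e (s+1) w ∧ Iv e j w ∧ evaln (s+1) (cde e) w = some 1 := by
  induction t with
  | zero => exact absurd h (fun h => act_not_wn (act_zero e) h)
  | succ t ih =>
    rcases act_or_wn e t with ⟨j0, hj0⟩ | ⟨w', hw'⟩
    · rcases step_cases hj0 with h1 | ⟨h1, _⟩ | ⟨w', h1, hiv, hev⟩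
      · exact absurd h1 (fun h1 => act_not_wn h1 h)
      · exact absurd h1 (fun h1 => act_not_wn h1 h)
      · have hww : w' = w := wn_uniq h1 h
        subst hww
        exact ⟨t, j0, hj0, h1, hiv, hev⟩
    · have := wn_uniq (wn_step hw') h
      subst this
      exact ih hw'

lemma iv_lower {e j x : ℕ} (hj : e + 1 ≤ j) (h : Iv e j x) : 2 ^ (e+1) ≤ x :=
  le_trans (Nat.pow_le_pow_right (by norm_num) hj) h.1

lemma holds_lower {e x s : ℕ} (h : Holds e x s) : 2 ^ (e+1) ≤ x := by
  rcases h with ⟨j, ha, hiv⟩ | ⟨w, hw, hx⟩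
  · exact iv_lower (act_bounds ha).1 hiv
  · obtain ⟨s', j, ha, _, hiv, _⟩ := wn_origin hw
    subst hx
    exact iv_lower (act_bounds ha).1 hiv

lemma holds_e_lt {e x s : ℕ} (h : Holds e x s) : e < x := by
  have h1 := holds_lower h
  have h2 : e + 1 < 2 ^ (e + 1) := Nat.lt_two_pow_self
  omega

lemma holds_back_step {e x s : ℕ} (hx : x ≤ s) (h : Holds e x (s+1)) : Holds e x s := by
  rcases act_or_wn e s with ⟨j0, hj0⟩ | ⟨w, hw⟩
  · rcases step_cases hj0 with h1 | ⟨h1, _⟩ | ⟨w, h1, hiv, _⟩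
    · rcases h with ⟨j, ha, hivx⟩ | ⟨w, hwn, hxw⟩
      · have hjj : j = j0 := act_uniq ha h1
        exact Or.inl ⟨j0, hj0, hjj ▸ hivx⟩
      · exact absurd h1 (fun h1 => act_not_wn h1 hwn)
    · rcases h with ⟨j, ha, hivx⟩ | ⟨w, hwn, hxw⟩
      · have hje : j = s + e + 2 := act_uniq ha h1
        subst hje
        exfalso
        have : 2 ^ (s + e + 2) ≤ x := hivx.1
        have : s + e + 2 < 2 ^ (s + e + 2) := Nat.lt_two_pow_self
        omega
      · exact absurd h1 (fun h1 => act_not_wn h1 hwn)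
    · rcases h with ⟨j, ha, hivx⟩ | ⟨w', hwn, hxw⟩
      · exact absurd ha (fun ha => act_not_wn ha h1)
      · have := wn_uniq hwn h1
        subst this
        subst hxw
        exact Or.inl ⟨j0, hj0, hiv⟩
  · rcases h with ⟨j, ha, hivx⟩ | ⟨w', hwn, hxw⟩
    · exact absurd ha (fun ha => act_not_wn ha (wn_step hw))
    · have hww : w = w' := wn_uniq (wn_step hw) hwn
      exact Or.inr ⟨w, hw, hxw.trans hww.symm⟩

lemma holds_back {e x s t : ℕ} (hx : x ≤ s) (hst : s ≤ t) (h : Holds e x t) :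
    Holds e x s := by
  induction t with
  | zero =>
    have : s = 0 := Nat.le_zero.1 hst
    subst this; exact h
  | succ t ih =>
    rcases Nat.le_succ_iff.1 hst with h2 | h2
    · exact ih h2 (holds_back_step (le_trans hx h2) h)
    · subst h2; exact h

lemma wn_holds {e t w : ℕ} (h : Wn e t w) : ∀ s, w ≤ s → Holds e w s := by
  intro s hws
  obtain ⟨t0, j, ha, hwn, hiv, _⟩ := wn_origin h
  rcases Nat.lt_or_ge s (t0+1) with hs | hs
  · have hst0 : s ≤ t0 := Nat.lt_succ_iff.1 hs
    rcases act_back ha s hst0 with h1 | h1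
    · exact Or.inl ⟨j, h1, hiv⟩
    · exfalso
      have : 2 ^ j ≤ w := hiv.1
      omega
  · exact Or.inr ⟨w, wn_persist hwn hs, rfl⟩

def holdsb (e x s : ℕ) : Bool :=
  if stt e s % 2 = 1 then decide (x = stt e s / 2)
  else decide (2 ^ (stt e s / 2) ≤ x) && decide (x < 2 ^ (stt e s / 2) + 2 ^ (stt e s / 2 - e))

lemma holdsb_iff {e x s : ℕ} : holdsb e x s = true ↔ Holds e x s := by
  unfold holdsb
  rcases Nat.even_or_odd (stt e s) with ⟨k, hk⟩ | ⟨k, hk⟩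
  · rw [if_neg (by omega)]
    have hd : stt e s / 2 = k := by omega
    have hact : Act e s k := by unfold Act; omega
    simp only [Bool.and_eq_true, decide_eq_true_eq, hd]
    constructor
    · rintro ⟨h1, h2⟩
      exact Or.inl ⟨k, hact, h1, h2⟩
    · rintro (⟨j, ha, hiv⟩ | ⟨w, hw, _⟩)
      · have : j = k := act_uniq ha hact
        subst this
        exact ⟨hiv.1, hiv.2⟩
      · exact absurd hact (fun h => act_not_wn h hw)
  · rw [if_pos (by omega)]
    have hd : stt e s / 2 = k := by omega
    have hwn : Wn e s k := by unfold Wn; omega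
    simp only [decide_eq_true_eq, hd]
    constructor
    · intro h
      exact Or.inr ⟨k, hwn, h⟩
    · rintro (⟨j, ha, _⟩ | ⟨w, hw, hx⟩)
      · exact absurd ha (fun h => act_not_wn h hwn)
      · have : w = k := wn_uniq hw hwn
        omega

def freeb (x s : ℕ) : Bool := decide (x ≤ s) && bAll (fun e => ! holdsb e x s) x

lemma freeb_iff {x s : ℕ} : freeb x s = true ↔ (x ≤ s ∧ ∀ e, ¬ Holds e x s) := by
  unfold freeb
  simp only [Bool.and_eq_true, decide_eq_true_eq, bAll_iff]
  constructor
  · rintro ⟨h1, h2⟩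
    refine ⟨h1, fun e he => ?_⟩
    have hlt : e < x := holds_e_lt he
    have h3 := h2 e hlt
    rw [Bool.not_eq_true'] at h3
    rw [holdsb_iff.2 he] at h3
    simp at h3
  · rintro ⟨h1, h2⟩
    refine ⟨h1, fun e _ => ?_⟩
    rw [Bool.not_eq_true']
    rcases hb : holdsb e x s
    · rfl
    · exact absurd (holdsb_iff.1 hb) (h2 e)

def Aset : Set ℕ := {x | ∃ s, freeb x s = true}

lemma not_mem_Aset {x : ℕ} : x ∉ Aset ↔ ∀ s, x ≤ s → ∃ e, Holds e x s := by
  unfold Aset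
  simp only [Set.mem_setOf_eq, not_exists]
  constructor
  · intro h s hs
    have h1 : ¬ (x ≤ s ∧ ∀ e, ¬ Holds e x s) := fun hc => h s (freeb_iff.2 hc)
    push_neg at h1
    obtain ⟨e, he⟩ := h1 hs
    exact ⟨e, he⟩
  · intro h s
    intro hf
    rw [freeb_iff] at hf
    obtain ⟨e, he⟩ := h s hf.1
    exact hf.2 e he

lemma two_pow_cast (a : ℕ) : ((2 ^ a : ℕ) : ℝ) = (2:ℝ) ^ a := by push_cast; ring

lemma perE (e : ℕ) : ∃ K : Finset ℕ,
    (∀ n : ℕ, ((K.filter (fun x => x ≤ n)).card : ℝ) ≤ (n : ℝ) / 2 ^ e) ∧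
    (∀ x, x ∉ K → ∃ B, ∀ s, B ≤ s → ¬ Holds e x s) := by
  have hpow : (0:ℝ) < 2 ^ e := by positivity
  by_cases hw : ∃ t w, Wn e t w
  · obtain ⟨t, w, hwn⟩ := hw
    have hwl : 2 ^ (e+1) ≤ w := by
      obtain ⟨s', j, ha, _, hiv, _⟩ := wn_origin hwn
      exact iv_lower (act_bounds ha).1 hiv
    refine ⟨{w}, ?_, ?_⟩
    · intro n
      rw [Finset.filter_singleton]
      by_cases hn : w ≤ n
      · rw [if_pos hn]
        simp only [Finset.card_singleton, Nat.cast_one]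
        rw [le_div_iff₀ hpow]
        have : (2:ℝ) ^ e ≤ ((2 ^ (e+1) : ℕ) : ℝ) := by
          rw [two_pow_cast]
          exact pow_le_pow_right₀ (by norm_num) (Nat.le_succ e)
        have h2 : ((2 ^ (e+1) : ℕ) : ℝ) ≤ (n : ℝ) := by
          exact_mod_cast le_trans hwl hn
        linarith
      · rw [if_neg hn]
        simp only [Finset.card_empty, Nat.cast_zero]
        positivity
    · intro x hx
      refine ⟨t, fun s hs h => ?_⟩
      have hwns : Wn e s w := wn_persist hwn hs
      rcases h with ⟨j, ha, _⟩ | ⟨w', hw', hxw⟩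
      · exact act_not_wn ha hwns
      · have : w' = w := wn_uniq hw' hwns
        exact hx (by simp [hxw, this])
  · push_neg at hw
    by_cases hs : ∃ s₂ j, ∀ s, s₂ ≤ s → Act e s j
    · obtain ⟨s₂, j, hstab⟩ := hs
      have hjb := act_bounds (hstab s₂ le_rfl)
      refine ⟨Finset.Ico (2^j) (2^j + 2^(j-e)), ?_, ?_⟩
      · intro n
        by_cases hn : 2 ^ j ≤ n
        · calc ((Finset.filter (fun x => x ≤ n) (Finset.Ico (2^j) (2^j + 2^(j-e)))).card : ℝ)
              ≤ ((Finset.Ico (2^j) (2^j + 2^(j-e))).card : ℝ) := by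
                exact_mod_cast Finset.card_filter_le _ _
            _ = ((2^(j-e) : ℕ) : ℝ) := by rw [Nat.card_Ico, Nat.add_sub_cancel_left]
            _ ≤ (n : ℝ) / 2 ^ e := by
                rw [two_pow_cast, le_div_iff₀ hpow, ← pow_add]
                have hje : j - e + e = j := by omega
                rw [hje, ← two_pow_cast]
                exact_mod_cast hn
        · have hempty : Finset.filter (fun x => x ≤ n) (Finset.Ico (2^j) (2^j + 2^(j-e))) = ∅ := by
            apply Finset.filter_false_of_mem
            intro x hx
            rw [Finset.mem_Ico] at hx
            omega
          rw [hempty]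
          simp only [Finset.card_empty, Nat.cast_zero]
          positivity
      · intro x hx
        refine ⟨s₂, fun s hss h => ?_⟩
        rcases h with ⟨j', ha, hiv⟩ | ⟨w', hw', _⟩
        · have : j' = j := act_uniq ha (hstab s hss)
          subst this
          exact hx (Finset.mem_Ico.2 ⟨hiv.1, hiv.2⟩)
        · exact hw s w' hw'
    · push_neg at hs
      have hub : ∀ m, ∃ s j, Act e s j ∧ m ≤ j := by
        intro m
        induction m with
        | zero => exact ⟨0, e+1, act_zero e, Nat.zero_le _⟩
        | succ m ih =>
          obtain ⟨s, j, ha, hm⟩ := ih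
          obtain ⟨s', hss', hna⟩ := hs s j
          rcases act_or_wn e s' with ⟨j', ha'⟩ | ⟨w', hw'⟩
          · have hj : j ≤ j' := act_mono hss' ha ha'
            have hne : j ≠ j' := fun h => hna (h ▸ ha')
            exact ⟨s', j', ha', by omega⟩
          · exact absurd hw' (hw s' w')
      refine ⟨∅, ?_, ?_⟩
      · intro n
        simp only [Finset.filter_empty, Finset.card_empty, Nat.cast_zero]
        positivity
      · intro x _
        obtain ⟨s₁, j₁, ha₁, hj₁⟩ := hub (x+1)
        refine ⟨s₁, fun s hss h => ?_⟩
        rcases h with ⟨j', ha', hiv⟩ | ⟨w', hw', _⟩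
        · have hj : j₁ ≤ j' := act_mono hss ha₁ ha'
          have h1 : 2 ^ j₁ ≤ 2 ^ j' := Nat.pow_le_pow_right (by norm_num) hj
          have h2 : j₁ < 2 ^ j₁ := Nat.lt_two_pow_self
          have := hiv.1
          omega
        · exact hw s w' hw'

open scoped Classical

noncomputable def Kf (e : ℕ) : Finset ℕ := (perE e).choose

lemma Kf_card (e n : ℕ) : (((Kf e).filter (fun x => x ≤ n)).card : ℝ) ≤ (n : ℝ) / 2 ^ e :=
  (perE e).choose_spec.1 n

lemma Kf_escape {e x : ℕ} (h : x ∉ Kf e) : ∃ B, ∀ s, B ≤ s → ¬ Holds e x s :=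
  (perE e).choose_spec.2 x h

lemma acomp_cover (n : ℕ) :
    (Finset.range (n+1)).filter (fun x => x ∉ Aset) ⊆
      (Finset.range (n+1)).biUnion (fun e => (Kf e).filter (fun x => x ≤ n)) := by
  intro x hx
  rw [Finset.mem_filter, Finset.mem_range] at hx
  obtain ⟨hxn, hxA⟩ := hx
  have hxn' : x ≤ n := by omega
  by_contra hc
  rw [Finset.mem_biUnion] at hc
  push_neg at hc
  have hnotK : ∀ e, e < x → x ∉ Kf e := by
    intro e he hK
    exact hc e (Finset.mem_range.2 (by omega)) (Finset.mem_filter.2 ⟨hK, hxn'⟩)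
  apply hxA
  have hBf : ∀ e, ∃ B, ∀ s, B ≤ s → (x ∉ Kf e → ¬ Holds e x s) := by
    intro e
    by_cases h : x ∉ Kf e
    · obtain ⟨B, hB⟩ := Kf_escape h
      exact ⟨B, fun s hs _ => hB s hs⟩
    · exact ⟨0, fun s _ h' => absurd h' h⟩
  choose Bf hBf' using hBf
  refine ⟨max x ((Finset.range x).sup Bf), freeb_iff.2 ⟨le_max_left _ _, ?_⟩⟩
  intro e he
  have hex : e < x := holds_e_lt he
  have hsup : Bf e ≤ (Finset.range x).sup Bf := Finset.le_sup (Finset.mem_range.2 hex)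
  exact hBf' e _ (le_trans hsup (le_max_right _ _)) (hnotK e hex) he

lemma geo_sum (E m : ℕ) : ∑ e ∈ Finset.Ico E m, ((1:ℝ)/2)^e ≤ (1/2)^E * 2 := by
  rcases le_or_gt E m with h | h
  · rw [Finset.sum_Ico_eq_sum_range]
    have : ∀ k, ((1:ℝ)/2)^(E + k) = (1/2)^E * (1/2)^k := fun k => pow_add _ _ _
    calc ∑ k ∈ Finset.range (m - E), ((1:ℝ)/2)^(E + k)
        = (1/2)^E * ∑ k ∈ Finset.range (m - E), ((1:ℝ)/2)^k := by
          rw [Finset.mul_sum]; exact Finset.sum_congr rfl (fun k _ => this k)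
      _ ≤ (1/2)^E * 2 := by
          apply mul_le_mul_of_nonneg_left _ (by positivity)
          have hg : ∑ k ∈ Finset.range (m - E), ((1:ℝ)/2)^k = 2 - 2 * (1/2)^(m-E) := by
            rw [geom_sum_eq (by norm_num)]
            ring
          rw [hg]
          have : (0:ℝ) ≤ (1/2)^(m-E) := by positivity
          linarith
  · rw [Finset.Ico_eq_empty (by omega)]
    simp only [Finset.sum_empty]
    positivity

lemma acomp_card_bound (E n : ℕ) (hEn : E ≤ n + 1) :
    ((((Finset.range (n+1)).filter (fun x => x ∉ Aset)).card : ℝ))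
      ≤ (∑ e ∈ Finset.range E, ((Kf e).card : ℝ)) + (n : ℝ) * ((1/2) ^ E * 2) := by
  have h1 : (((Finset.range (n+1)).filter (fun x => x ∉ Aset)).card : ℝ)
      ≤ ∑ e ∈ Finset.range (n+1), (((Kf e).filter (fun x => x ≤ n)).card : ℝ) := by
    have := Finset.card_le_card (acomp_cover n)
    have h2 := Finset.card_biUnion_le (s := Finset.range (n+1))
      (t := fun e => (Kf e).filter (fun x => x ≤ n))
    have h3 : (((Finset.range (n+1)).filter (fun x => x ∉ Aset)).card : ℕ)
        ≤ ∑ e ∈ Finset.range (n+1), ((Kf e).filter (fun x => x ≤ n)).card :=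
      le_trans this h2
    exact_mod_cast h3
  have hsplit : ∑ e ∈ Finset.range (n+1), (((Kf e).filter (fun x => x ≤ n)).card : ℝ)
      = (∑ e ∈ Finset.range E, (((Kf e).filter (fun x => x ≤ n)).card : ℝ))
        + ∑ e ∈ Finset.Ico E (n+1), (((Kf e).filter (fun x => x ≤ n)).card : ℝ) := by
    rw [Finset.range_eq_Ico, ← Finset.sum_Ico_consecutive _ (Nat.zero_le E) hEn,
      ← Finset.range_eq_Ico]
  have hfirst : ∑ e ∈ Finset.range E, (((Kf e).filter (fun x => x ≤ n)).card : ℝ)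
      ≤ ∑ e ∈ Finset.range E, ((Kf e).card : ℝ) := by
    apply Finset.sum_le_sum
    intro e _
    exact_mod_cast Finset.card_filter_le _ _
  have hsecond : ∑ e ∈ Finset.Ico E (n+1), (((Kf e).filter (fun x => x ≤ n)).card : ℝ)
      ≤ (n : ℝ) * ((1/2) ^ E * 2) := by
    calc ∑ e ∈ Finset.Ico E (n+1), (((Kf e).filter (fun x => x ≤ n)).card : ℝ)
        ≤ ∑ e ∈ Finset.Ico E (n+1), (n : ℝ) * (1/2)^e := by
          apply Finset.sum_le_sum
          intro e _
          have := Kf_card e n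
          have heq : (n : ℝ) / 2 ^ e = (n : ℝ) * (1/2)^e := by
            rw [div_pow, one_pow]
            ring
          rw [← heq]
          exact this
      _ = (n : ℝ) * ∑ e ∈ Finset.Ico E (n+1), ((1:ℝ)/2)^e := by rw [Finset.mul_sum]
      _ ≤ (n : ℝ) * ((1/2) ^ E * 2) := by
          apply mul_le_mul_of_nonneg_left (geo_sum E (n+1)) (by positivity)
  calc (((Finset.range (n+1)).filter (fun x => x ∉ Aset)).card : ℝ)
      ≤ _ := h1
    _ = _ := hsplit
    _ ≤ _ := add_le_add hfirst hsecond

lemma pd_eq (A : Set ℕ) (n : ℕ) :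
    partialDensity A n
      = 1 - (((Finset.range (n+1)).filter (fun x => x ∉ A)).card : ℝ) / (n+1) := by
  unfold partialDensity
  have h := Finset.card_filter_add_card_filter_not
    (s := Finset.range (n+1)) (p := fun x => x ∈ A)
  rw [Finset.card_range] at h
  have hn : (0:ℝ) < (n:ℝ)+1 := by positivity
  have hc : (((Finset.range (n+1)).filter (fun x => x ∈ A)).card : ℝ)
      = ((n:ℝ)+1) - (((Finset.range (n+1)).filter (fun x => x ∉ A)).card : ℝ) := by
    have h2 : ((Finset.range (n+1)).filter (fun x => x ∈ A)).card
        = (n+1) - ((Finset.range (n+1)).filter (fun x => x ∉ A)).card := by omega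
    rw [h2]
    have h3 : ((Finset.range (n+1)).filter (fun x => x ∉ A)).card ≤ n+1 := by omega
    push_cast [h3]
    ring
  rw [show ((Finset.range (n + 1)).filter (· ∈ A)).card
      = ((Finset.range (n+1)).filter (fun x => x ∈ A)).card from rfl]
  rw [hc]
  push_cast
  field_simp

lemma densA : HasDensity Aset 1 := by
  unfold HasDensity
  rw [Metric.tendsto_atTop]
  intro ε hε
  obtain ⟨E, hE⟩ := exists_pow_lt_of_lt_one (show (0:ℝ) < ε/4 by linarith)
    (show ((1:ℝ)/2) < 1 by norm_num)
  set S : ℝ := ∑ e ∈ Finset.range E, ((Kf e).card : ℝ) with hS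
  have hS0 : 0 ≤ S := Finset.sum_nonneg (fun e _ => by positivity)
  obtain ⟨N₁, hN₁⟩ := exists_nat_gt (S / (ε/4))
  refine ⟨max E N₁, fun n hn => ?_⟩
  have hnE : E ≤ n := le_trans (le_max_left _ _) hn
  have hnN₁ : N₁ ≤ n := le_trans (le_max_right _ _) hn
  have hpos : (0:ℝ) < (n:ℝ)+1 := by positivity
  set q : ℝ := (((Finset.range (n+1)).filter (fun x => x ∉ Aset)).card : ℝ) / ((n:ℝ)+1) with hq
  have hq0 : 0 ≤ q := by positivity
  have hbound := acomp_card_bound E n (by omega)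
  have hc0 : (0:ℝ) ≤ (1/2)^E * 2 := by positivity
  have hq1 : q ≤ S / ((n:ℝ)+1) + (1/2)^E * 2 := by
    have h1 : q ≤ (S + (n:ℝ) * ((1/2)^E*2)) / ((n:ℝ)+1) := by
      rw [hq]
      gcongr
    have h2 : (n:ℝ) * ((1/2)^E*2) / ((n:ℝ)+1) ≤ (1/2)^E*2 := by
      rw [div_le_iff₀ hpos]
      nlinarith
    rw [add_div] at h1
    linarith
  have hSn : S / ((n:ℝ)+1) < ε/4 := by
    rw [div_lt_iff₀ hpos]
    rw [div_lt_iff₀ (show (0:ℝ) < ε/4 by linarith)] at hN₁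
    have hN : (N₁:ℝ) ≤ (n:ℝ) := by exact_mod_cast hnN₁
    nlinarith
  have hE2 : (1/2:ℝ)^E * 2 < ε/2 := by linarith
  rw [pd_eq]
  have hd : dist (1 - q) 1 = q := by
    rw [Real.dist_eq, abs_of_nonpos (by linarith)]
    ring
  rw [hd]
  linarith

lemma evaln_isSome_mono {k k' : ℕ} {c : Code} {x : ℕ} (h : k ≤ k')
    (hs : (evaln k c x).isSome = true) : (evaln k' c x).isSome = true := by
  rcases Option.isSome_iff_exists.1 hs with ⟨v, hv⟩
  have : v ∈ evaln k' c x := evaln_mono h hv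
  exact Option.isSome_iff_exists.2 ⟨v, this⟩

lemma step_fail {e t j : ℕ} (h : Act e t j)
    (hfuel : ∀ i, i < 2^(j-e) → (evaln (t+1) (cde e) (2^j+i)).isSome = true) :
    (∃ w, Wn e (t+1) w) ∨ Act e (t+1) (t+e+2) := by
  unfold Act at h
  have hst : stt e (t+1) = stepf e t (stt e t) := rfl
  rw [h] at hst
  unfold stepf at hst
  rw [if_neg (by omega)] at hst
  have hdiv : 2 * j / 2 = j := by omega
  rw [hdiv] at hst
  rcases hb : bFind (fun i => chk1 e (t+1) (2 ^ j + i)) (2 ^ (j - e)) with _ | i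
  · rw [hb] at hst
    have hA : bAll (fun i => chkD e (t+1) (2 ^ j + i)) (2 ^ (j - e)) = true :=
      (bAll_iff _ _).2 (fun i hi => hfuel i hi)
    rw [hA] at hst
    right; exact hst
  · rw [hb] at hst
    exact Or.inl ⟨2 ^ j + i, hst⟩

lemma fuel_bound (c : Code) (tot : ∀ x, (eval c x).Dom) (a m : ℕ) :
    ∃ k, ∀ i, i < m → (evaln k c (a+i)).isSome = true := by
  induction m with
  | zero => exact ⟨0, fun i hi => absurd hi (by omega)⟩
  | succ m ih =>
    obtain ⟨k, hk⟩ := ih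
    have hd := tot (a+m)
    have hv : (eval c (a+m)).get hd ∈ eval c (a+m) := Part.get_mem hd
    obtain ⟨k', hk'⟩ := evaln_complete.1 hv
    refine ⟨max k k', fun i hi => ?_⟩
    rcases Nat.lt_succ_iff_lt_or_eq.1 hi with h' | h'
    · exact evaln_isSome_mono (le_max_left _ _) (hk i h')
    · subst h'
      exact evaln_isSome_mono (le_max_right _ _)
        (Option.isSome_iff_exists.2 ⟨_, hk'⟩)

lemma trans_exists {e : ℕ} (tot : ∀ x, (eval (cde e) x).Dom)
    (hnw : ∀ t w, ¬ Wn e t w) (s : ℕ) :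
    ∃ t, s ≤ t ∧ ∃ j, Act e t j ∧ ¬ Act e (t+1) j := by
  by_contra hc
  push_neg at hc
  obtain ⟨j₀, hj₀⟩ : ∃ j, Act e s j := by
    rcases act_or_wn e s with h | ⟨w, hw⟩
    · exact h
    · exact absurd hw (hnw s w)
  have hstab : ∀ t, s ≤ t → Act e t j₀ := by
    intro t ht
    induction t with
    | zero =>
      have : s = 0 := Nat.le_zero.1 ht
      subst this; exact hj₀
    | succ t ih =>
      rcases Nat.le_succ_iff.1 ht with h' | h'
      · exact hc (t) h' j₀ (ih h')
      · subst h'; exact hj₀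
  obtain ⟨k, hk⟩ := fuel_bound (cde e) tot (2^j₀) (2^(j₀-e))
  set t := max s k with hT
  have hAt : Act e t j₀ := hstab t (le_max_left _ _)
  have hfuel : ∀ i, i < 2^(j₀-e) → (evaln (t+1) (cde e) (2^j₀+i)).isSome = true :=
    fun i hi => evaln_isSome_mono (by omega) (hk i hi)
  rcases step_fail hAt hfuel with ⟨w, hw⟩ | hA
  · exact hnw _ _ hw
  · have h2 : Act e (t+1) j₀ := hstab (t+1) (by omega)
    have := act_uniq hA h2
    have := (act_bounds hAt).2
    omega

lemma dead_cert {e t j : ℕ} (h : Act e t j) (hna : ¬ Act e (t+1) j)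
    (hnw : ∀ t w, ¬ Wn e t w) :
    ∀ x, Iv e j x → ∃ v, evaln (t+1) (cde e) x = some v ∧ v ≠ 1 := by
  rcases step_cases h with h1 | ⟨h1, h2⟩ | ⟨w, h1, _⟩
  · exact absurd h1 hna
  · exact h2
  · exact absurd h1 (hnw _ _)

lemma dead_unbounded {e : ℕ} (tot : ∀ x, (eval (cde e) x).Dom)
    (hnw : ∀ t w, ¬ Wn e t w) (M : ℕ) :
    ∃ t j, M ≤ j ∧ Act e t j ∧ ¬ Act e (t+1) j := by
  have hub : ∀ m, ∃ s j, Act e s j ∧ m ≤ j := by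
    intro m
    induction m with
    | zero => exact ⟨0, e+1, act_zero e, Nat.zero_le _⟩
    | succ m ih =>
      obtain ⟨s, j, ha, hm⟩ := ih
      obtain ⟨t, hst, j', ha', hna'⟩ := trans_exists tot hnw s
      obtain ⟨j'', ha''⟩ : ∃ j'', Act e (t+1) j'' := by
        rcases act_or_wn e (t+1) with h | ⟨w, hw⟩
        · exact h
        · exact absurd hw (hnw _ w)
      have h1 : j' ≤ j'' := act_mono_step ha' ha''
      have h2 : j'' ≠ j' := fun hh => hna' (hh ▸ ha'')
      have h3 : j ≤ j' := act_mono hst ha ha'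
      exact ⟨t+1, j'', ha'', by omega⟩
  obtain ⟨s, j, ha, hm⟩ := hub M
  obtain ⟨t, hst, j', ha', hna'⟩ := trans_exists tot hnw s
  exact ⟨t, j', le_trans hm (act_mono hst ha ha'), ha', hna'⟩

theorem no_comp_subset (C : Set ℕ) (hsub : C ⊆ Aset) (hcomp : ComputablePred (· ∈ C)) :
    ¬ HasDensity C 1 := by
  intro hdens
  obtain ⟨f, hf, hfC⟩ := ComputablePred.computable_iff.1 hcomp
  set g : ℕ → ℕ := fun x => cond (f x) 1 0 with hg
  have hgc : Computable g := Computable.cond hf (Computable.const 1) (Computable.const 0)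
  have hNat : Nat.Partrec (fun n => Part.some (g n)) := Partrec.nat_iff.1 hgc.partrec
  obtain ⟨c, hc⟩ := Nat.Partrec.Code.exists_code.1 hNat
  obtain ⟨e, hcde⟩ : ∃ e, cde e = c := ⟨Encodable.encode c, Denumerable.ofNat_encode c⟩
  have tot : ∀ x, (eval (cde e) x).Dom := by
    intro x
    rw [hcde, hc]
    trivial
  have hval : ∀ x v, v ∈ eval (cde e) x → v = g x := by
    intro x v hv
    rw [hcde, hc] at hv
    exact Part.mem_some_iff.1 hv
  have hmemC : ∀ x, x ∈ C ↔ f x = true := fun x => iff_of_eq (congrFun hfC x)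
  by_cases hw : ∃ t w, Wn e t w
  · obtain ⟨t, w, hwn⟩ := hw
    obtain ⟨s', j, _, _, _, hev⟩ := wn_origin hwn
    have h1 : (1 : ℕ) ∈ eval (cde e) w := evaln_sound hev
    have h2 : 1 = g w := hval w 1 h1
    have hfw : f w = true := by
      rcases hb : f w
      · rw [hg] at h2; simp [hb] at h2
      · rfl
    have hwC : w ∈ C := (hmemC w).2 hfw
    have hwA : w ∈ Aset := hsub hwC
    obtain ⟨s, hfree⟩ := hwA
    rw [freeb_iff] at hfree
    exact hfree.2 e (wn_holds hwn s hfree.1)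
  · push_neg at hw
    have hδ : (0:ℝ) < 1 / (2^e + 1) := by positivity
    obtain ⟨N, hN⟩ := Metric.tendsto_atTop.1 hdens (1 / (2^e + 1)) hδ
    obtain ⟨t, j, hMj, ha, hna⟩ := dead_unbounded tot hw N
    have hcert := dead_cert ha hna hw
    have hnotC : ∀ x, Iv e j x → x ∉ C := by
      intro x hx hxC
      obtain ⟨v, hev, hv1⟩ := hcert x hx
      have : v ∈ eval (cde e) x := evaln_sound hev
      have hvg : v = g x := hval x v this
      have hfx : f x = true := (hmemC x).1 hxC
      rw [hg] at hvg
      simp only [hfx, cond_true] at hvg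
      exact hv1 hvg
    have hje : e + 1 ≤ j := (act_bounds ha).1
    have hone : 1 ≤ 2^(j-e) := Nat.one_le_two_pow
    have h2jp : 1 ≤ 2^j := Nat.one_le_two_pow
    set n := 2^j + 2^(j-e) - 1 with hn
    have hn1 : n + 1 = 2^j + 2^(j-e) := by omega
    have h2j : j < 2 ^ j := Nat.lt_two_pow_self
    have hnN : N ≤ n := by omega
    have hsubIv : Finset.Ico (2^j) (2^j + 2^(j-e)) ⊆ Finset.range (n+1) := by
      intro x hx
      rw [Finset.mem_Ico] at hx
      rw [Finset.mem_range]
      omega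
    have hdisj : Disjoint ((Finset.range (n+1)).filter (fun x => x ∈ C))
        (Finset.Ico (2^j) (2^j + 2^(j-e))) := by
      rw [Finset.disjoint_left]
      intro x hx hx2
      rw [Finset.mem_filter] at hx
      rw [Finset.mem_Ico] at hx2
      exact hnotC x ⟨hx2.1, hx2.2⟩ hx.2
    have hcard : ((Finset.range (n+1)).filter (fun x => x ∈ C)).card + 2^(j-e) ≤ n+1 := by
      have h1 : ((Finset.range (n+1)).filter (fun x => x ∈ C)) ∪
          Finset.Ico (2^j) (2^j + 2^(j-e)) ⊆ Finset.range (n+1) :=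
        Finset.union_subset (Finset.filter_subset _ _) hsubIv
      have h2 := Finset.card_le_card h1
      rw [Finset.card_union_of_disjoint hdisj, Finset.card_range, Nat.card_Ico,
        Nat.add_sub_cancel_left] at h2
      exact h2
    have hpd : partialDensity C n ≤ 1 - 1/(2^e + 1) := by
      unfold partialDensity
      have hpos : (0:ℝ) < (n:ℝ)+1 := by positivity
      have hcast : (((Finset.range (n+1)).filter (· ∈ C)).card : ℝ)
          ≤ ((n:ℝ)+1) - (2:ℝ)^(j-e) := by
        have h6 : ((((Finset.range (n+1)).filter (fun x => x ∈ C)).card : ℕ) : ℝ)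
            + ((2^(j-e) : ℕ) : ℝ) ≤ ((n:ℝ)+1) := by exact_mod_cast hcard
        rw [two_pow_cast] at h6
        exact by linarith
      have hje2 : j - e + e = j := by omega
      have hne : ((n:ℝ)+1) = (2:ℝ)^(j-e) * ((2:ℝ)^e + 1) := by
        have h7 : (2:ℕ)^j = 2^(j-e) * 2^e := by rw [← pow_add, hje2]
        have h8 : (n+1 : ℕ) = 2^(j-e) * (2^e + 1) := by rw [hn1, h7]; ring
        rw [show ((n:ℝ)+1) = ((n+1 : ℕ) : ℝ) by push_cast; ring, h8]
        push_cast
        ring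
      rw [div_le_iff₀ hpos, hne]
      have hq : (1 - 1/((2:ℝ)^e+1)) * ((2:ℝ)^(j-e) * ((2:ℝ)^e+1))
          = (2:ℝ)^(j-e) * ((2:ℝ)^e+1) - (2:ℝ)^(j-e) := by
        have h9 : ((2:ℝ)^e+1) ≠ 0 := by positivity
        field_simp
      rw [hq, ← hne]
      linarith
    have hdist := hN n hnN
    rw [Real.dist_eq] at hdist
    have : |partialDensity C n - 1| ≥ 1/(2^e+1) := by
      rw [abs_of_nonpos (by linarith)]
      linarith
    linarith

section Computability

lemma primrec_pow2 : Primrec₂ (fun a b : ℕ => a ^ b) :=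
  Primrec₂.unpaired.1 (Primrec.nat_iff.2 Nat.Primrec.pow)

lemma primrec_band {α} [Primcodable α] {f g : α → Bool} (hf : Primrec f) (hg : Primrec g) :
    Primrec fun a => f a && g a :=
  (Primrec.cond hf hg (Primrec.const false)).of_eq fun a => by cases h : f a <;> simp [h]

lemma primrec_bnot {α} [Primcodable α] {f : α → Bool} (hf : Primrec f) :
    Primrec fun a => ! f a :=
  (Primrec.cond hf (Primrec.const false) (Primrec.const true)).of_eq
    fun a => by cases h : f a <;> simp [h]

lemma primrec_bAll {α} [Primcodable α] {p : α → ℕ → Bool} (hp : Primrec₂ p)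
    {k : α → ℕ} (hk : Primrec k) : Primrec fun a => bAll (p a) (k a) := by
  have hh : Primrec₂ (fun (a : α) (y : ℕ × Bool) => y.2 && p a y.1) :=
    primrec_band (Primrec.snd.comp Primrec.snd)
      (hp.comp Primrec.fst (Primrec.fst.comp Primrec.snd))
  have h := Primrec.nat_rec' hk (Primrec.const true) hh
  refine h.of_eq fun a => ?_
  induction k a with
  | zero => rfl
  | succ m ih =>
    show (Nat.rec true (fun n IH => (n, IH).2 && p a (n, IH).1) m && p a m : Bool) = bAll (p a) (m+1)
    rw [ih]
    rfl

lemma primrec_bFind {α} [Primcodable α] {p : α → ℕ → Bool} (hp : Primrec₂ p)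
    {k : α → ℕ} (hk : Primrec k) : Primrec fun a => bFind (p a) (k a) := by
  have hh : Primrec₂ (fun (a : α) (y : ℕ × Option ℕ) =>
      y.2 <|> (bif p a y.1 then some y.1 else none)) :=
    Primrec.option_orElse.comp (Primrec.snd.comp Primrec.snd)
      (Primrec.cond (hp.comp Primrec.fst (Primrec.fst.comp Primrec.snd))
        (Primrec.option_some.comp (Primrec.fst.comp Primrec.snd))
        (Primrec.const none))
  have h := Primrec.nat_rec' hk (Primrec.const (none : Option ℕ)) hh
  refine h.of_eq fun a => ?_
  induction k a with
  | zero => rfl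
  | succ m ih =>
    show (Nat.rec (none : Option ℕ) (fun n IH => (n, IH).2 <|> bif p a (n, IH).1 then some (n, IH).1 else none) m
        <|> bif p a m then some m else none) = bFind (p a) (m+1)
    rw [ih]
    rfl

lemma primrec_evaln : Primrec fun q : (ℕ × ℕ) × ℕ => evaln q.1.2 (cde q.1.1) q.2 :=
  Nat.Partrec.Code.primrec_evaln.comp
    (Primrec.pair
      (Primrec.pair (Primrec.snd.comp Primrec.fst)
        ((Primrec.ofNat Code).comp (Primrec.fst.comp Primrec.fst)))
      Primrec.snd)

lemma primrec_stepf : Primrec fun q : (ℕ × ℕ) × ℕ => stepf q.1.1 q.1.2 q.2 := by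
  have hj : Primrec fun q : (ℕ × ℕ) × ℕ => q.2 / 2 :=
    Primrec.nat_div.comp Primrec.snd (Primrec.const 2)
  have hlo : Primrec fun q : (ℕ × ℕ) × ℕ => 2 ^ (q.2 / 2) :=
    primrec_pow2.comp (Primrec.const 2) hj
  have hlen : Primrec fun q : (ℕ × ℕ) × ℕ => 2 ^ (q.2 / 2 - q.1.1) :=
    primrec_pow2.comp (Primrec.const 2)
      (Primrec.nat_sub.comp hj (Primrec.fst.comp Primrec.fst))
  have hev : Primrec₂ fun (q : (ℕ × ℕ) × ℕ) (i : ℕ) =>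
      evaln (q.1.2+1) (cde q.1.1) (2 ^ (q.2/2) + i) :=
    primrec_evaln.comp
      (Primrec.pair
        (Primrec.pair (Primrec.fst.comp (Primrec.fst.comp Primrec.fst))
          (Primrec.succ.comp (Primrec.snd.comp (Primrec.fst.comp Primrec.fst))))
        (Primrec.nat_add.comp (hlo.comp Primrec.fst) Primrec.snd))
  have hp1 : Primrec₂ fun (q : (ℕ × ℕ) × ℕ) (i : ℕ) => chk1 q.1.1 (q.1.2+1) (2 ^ (q.2/2) + i) :=
    Primrec.eq.comp (α := ((ℕ × ℕ) × ℕ) × ℕ) (β := Option ℕ) hev (Primrec.const (some 1)) |>.decide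
  have hpD : Primrec₂ fun (q : (ℕ × ℕ) × ℕ) (i : ℕ) => chkD q.1.1 (q.1.2+1) (2 ^ (q.2/2) + i) :=
    Primrec.option_isSome.comp hev
  have hfind : Primrec fun q : (ℕ × ℕ) × ℕ =>
      bFind (fun i => chk1 q.1.1 (q.1.2+1) (2 ^ (q.2/2) + i)) (2 ^ (q.2/2 - q.1.1)) :=
    primrec_bFind hp1 hlen
  have hall : Primrec fun q : (ℕ × ℕ) × ℕ =>
      bAll (fun i => chkD q.1.1 (q.1.2+1) (2 ^ (q.2/2) + i)) (2 ^ (q.2/2 - q.1.1)) :=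
    primrec_bAll hpD hlen
  have hnone : Primrec fun q : (ℕ × ℕ) × ℕ =>
      (bif bAll (fun i => chkD q.1.1 (q.1.2+1) (2 ^ (q.2/2) + i)) (2 ^ (q.2/2 - q.1.1)) then
        2 * (q.1.2 + q.1.1 + 2) else q.2) :=
    Primrec.cond hall
      (Primrec.nat_mul.comp (Primrec.const 2)
        (Primrec.nat_add.comp
          (Primrec.nat_add.comp (Primrec.snd.comp Primrec.fst) (Primrec.fst.comp Primrec.fst))
          (Primrec.const 2)))
      Primrec.snd
  have hsome : Primrec₂ fun (q : (ℕ × ℕ) × ℕ) (i : ℕ) => 2 * (2 ^ (q.2/2) + i) + 1 :=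
    Primrec.succ.comp
      (Primrec.nat_mul.comp (Primrec.const 2)
        (Primrec.nat_add.comp (hlo.comp Primrec.fst) Primrec.snd))
  have hbody : Primrec fun q : (ℕ × ℕ) × ℕ =>
      (match bFind (fun i => chk1 q.1.1 (q.1.2+1) (2 ^ (q.2/2) + i)) (2 ^ (q.2/2 - q.1.1)) with
      | some i => 2 * (2 ^ (q.2/2) + i) + 1
      | none =>
          bif bAll (fun i => chkD q.1.1 (q.1.2+1) (2 ^ (q.2/2) + i)) (2 ^ (q.2/2 - q.1.1)) then
            2 * (q.1.2 + q.1.1 + 2) else q.2) := by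
    have := Primrec.option_casesOn hfind hnone hsome
    refine this.of_eq fun q => ?_
    rcases bFind (fun i => chk1 q.1.1 (q.1.2+1) (2 ^ (q.2/2) + i)) (2 ^ (q.2/2 - q.1.1)) <;> rfl
  have hmod : PrimrecPred fun q : (ℕ × ℕ) × ℕ => q.2 % 2 = 1 :=
    Primrec.eq.comp (Primrec.nat_mod.comp Primrec.snd (Primrec.const 2)) (Primrec.const 1)
  have := Primrec.ite hmod Primrec.snd hbody
  exact this.of_eq fun q => by unfold stepf; rcases q with ⟨⟨e, s⟩, st⟩; rfl

lemma primrec_stt : Primrec₂ stt := by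
  have hh : Primrec₂ fun (p : ℕ × ℕ) (y : ℕ × ℕ) => stepf p.1 y.1 y.2 :=
    primrec_stepf.comp
      (Primrec.pair
        (Primrec.pair (Primrec.fst.comp Primrec.fst) (Primrec.fst.comp Primrec.snd))
        (Primrec.snd.comp Primrec.snd))
  have h := Primrec.nat_rec' (Primrec.snd)
    (Primrec.nat_mul.comp (Primrec.const 2) (Primrec.succ.comp Primrec.fst)) hh
  refine h.of_eq fun p => ?_
  induction p.2 with
  | zero => rfl
  | succ s ih =>
    show stepf p.1 s (Nat.rec (2 * p.1.succ) (fun n IH => stepf p.1 (n, IH).1 (n, IH).2) s)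
        = stt p.1 (s+1)
    rw [ih]
    rfl

lemma primrec_holdsb : Primrec fun q : (ℕ × ℕ) × ℕ => holdsb q.2 q.1.1 q.1.2 := by
  have hstt : Primrec fun q : (ℕ × ℕ) × ℕ => stt q.2 q.1.2 :=
    primrec_stt.comp Primrec.snd (Primrec.snd.comp Primrec.fst)
  have hj : Primrec fun q : (ℕ × ℕ) × ℕ => stt q.2 q.1.2 / 2 :=
    Primrec.nat_div.comp hstt (Primrec.const 2)
  have hmod : PrimrecPred fun q : (ℕ × ℕ) × ℕ => stt q.2 q.1.2 % 2 = 1 :=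
    Primrec.eq.comp (Primrec.nat_mod.comp hstt (Primrec.const 2)) (Primrec.const 1)
  have hx : Primrec fun q : (ℕ × ℕ) × ℕ => q.1.1 := Primrec.fst.comp Primrec.fst
  have hthen : Primrec fun q : (ℕ × ℕ) × ℕ => decide (q.1.1 = stt q.2 q.1.2 / 2) :=
    (Primrec.eq.comp hx hj).decide
  have hpowj : Primrec fun q : (ℕ × ℕ) × ℕ => 2 ^ (stt q.2 q.1.2 / 2) :=
    primrec_pow2.comp (Primrec.const 2) hj
  have hpowje : Primrec fun q : (ℕ × ℕ) × ℕ => 2 ^ (stt q.2 q.1.2 / 2 - q.2) :=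
    primrec_pow2.comp (Primrec.const 2) (Primrec.nat_sub.comp hj Primrec.snd)
  have helse : Primrec fun q : (ℕ × ℕ) × ℕ =>
      (decide (2 ^ (stt q.2 q.1.2 / 2) ≤ q.1.1) &&
        decide (q.1.1 < 2 ^ (stt q.2 q.1.2 / 2) + 2 ^ (stt q.2 q.1.2 / 2 - q.2))) :=
    primrec_band (Primrec.nat_le.comp hpowj hx).decide
      ((Primrec.nat_lt).comp hx (Primrec.nat_add.comp hpowj hpowje)).decide
  have := Primrec.ite hmod hthen helse
  exact this.of_eq fun q => by unfold holdsb; rfl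

lemma primrec_freeb : Primrec₂ freeb := by
  have hba : Primrec fun a : ℕ × ℕ => bAll (fun e => ! holdsb e a.1 a.2) a.1 :=
    primrec_bAll (p := fun a e => ! holdsb e a.1 a.2) (primrec_bnot primrec_holdsb) Primrec.fst
  have h := primrec_band
    (Primrec.nat_le.comp (Primrec.fst (α := ℕ) (β := ℕ)) Primrec.snd).decide hba
  exact h.of_eq fun a => rfl

end Computability

theorem ceA : CE Aset := by
  refine ⟨fun x => Nat.rfind (fun s => Part.some (freeb x s)), ?_, ?_⟩
  · exact Partrec.rfind (Computable₂.partrec₂ (primrec_freeb.to_comp))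
  · ext x
    simp only [Set.mem_setOf_eq]
    constructor
    · rintro ⟨s, hs⟩
      exact Nat.rfind_dom.2 ⟨s, Part.mem_some_iff.2 hs.symm, fun {m} _ => trivial⟩
    · intro hdom
      obtain ⟨n, hn, -⟩ := Nat.rfind_dom.1 hdom
      exact ⟨n, (Part.mem_some_iff.1 hn).symm⟩

end S14


/-- there is a c.e. set of density 1 with no computable subset of
density 1. -/
theorem stmt14 :
    ∃ A : Set ℕ, CE A ∧ HasDensity A 1 ∧
      ∀ C : Set ℕ, C ⊆ A → ComputableSet C → ¬HasDensity C 1 := by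
  exact ⟨S14.Aset, S14.ceA, S14.densA, fun C hsub hcomp => S14.no_comp_subset C hsub hcomp⟩
end

section
/- A set A ⊆ ℕ has a generic description by a partial computable function whose domain is computable if and only if A is densely approximable by computable sets, i.e. there exist computable sets C₀ ⊆ ℕ \ A and C₁ ⊆ A with C₀ ∪ C₁ of density 1. -/
open Filter

/-- Partial functions `ℕ →. ℕ` computable relative to a (total) oracle `O : ℕ → ℕ`. -/
inductive RecursiveInOracle (O : ℕ → ℕ) : (ℕ →. ℕ) → Prop
  | zero : RecursiveInOracle O (pure 0)
  | succ : RecursiveInOracle O fun n => Part.some (n + 1)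
  | left : RecursiveInOracle O fun n => Part.some (Nat.unpair n).1
  | right : RecursiveInOracle O fun n => Part.some (Nat.unpair n).2
  | oracle : RecursiveInOracle O fun n => Part.some (O n)
  | pair {f g : ℕ →. ℕ} : RecursiveInOracle O f → RecursiveInOracle O g →
      RecursiveInOracle O fun n => Nat.pair <$> f n <*> g n
  | comp {f g : ℕ →. ℕ} : RecursiveInOracle O f → RecursiveInOracle O g →
      RecursiveInOracle O fun n => g n >>= f
  | prec {f g : ℕ →. ℕ} : RecursiveInOracle O f → RecursiveInOracle O g →
      RecursiveInOracle O (Nat.unpaired fun a n =>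
        n.rec (f a) fun y IH => do let i ← IH; g (Nat.pair a (Nat.pair y i)))
  | rfind {f : ℕ →. ℕ} : RecursiveInOracle O f →
      RecursiveInOracle O fun a => Nat.rfind fun n => (fun m => m = 0) <$> f (Nat.pair a n)

/-- `A ≤_T B`: the characteristic function of `A` is computable relative to `B`. -/
def TuringReducibleSet (A B : Set ℕ) : Prop :=
  RecursiveInOracle (charFun B) fun n => Part.some (charFun A n)

/-- `A ≡_T B`. -/
def TuringEquivalentSet (A B : Set ℕ) : Prop :=
  TuringReducibleSet A B ∧ TuringReducibleSet B A

/-- `A` has a partial computable generic description with computable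
domain iff `A` is densely approximable by computable sets. -/
theorem stmt16 (A : Set ℕ) :
    (∃ Φ : ℕ →. ℕ, Partrec Φ ∧ IsGenericDescription Φ A ∧
        ComputableSet {x | (Φ x).Dom}) ↔
      ∃ C₀ C₁ : Set ℕ, ComputableSet C₀ ∧ ComputableSet C₁ ∧ C₀ ⊆ Aᶜ ∧ C₁ ⊆ A ∧
        HasDensity (C₀ ∪ C₁) 1 := by
  classical
  constructor
  · rintro ⟨Φ, hΦ, ⟨hval, hdens⟩, hdom⟩
    obtain ⟨d, hd, hdeq⟩ := ComputablePred.computable_iff.1 hdom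
    have hdmem : ∀ x, (Φ x).Dom ↔ d x = true := fun x => by
      have := congrFun hdeq x; exact this.to_iff
    set g : ℕ → ℕ := fun x => if h : (Φ x).Dom then (Φ x).get h else 0 with hgdef
    have hgc : Computable g := by
      have h1 : Partrec (fun x => bif d x then Φ x else Part.some 0) :=
        Partrec.cond hd hΦ ((Computable.const 0).partrec)
      have h2 : Partrec (fun x => (Part.some (g x) : Part ℕ)) := by
        apply h1.of_eq
        intro x
        by_cases h : (Φ x).Dom
        · have hdx : d x = true := (hdmem x).1 h
          simp [hdx, hgdef, h, Part.some_get]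
        · have hdx : d x = false := by
            cases hx : d x
            · rfl
            · exact absurd ((hdmem x).2 hx) h
          simp [hdx, hgdef, h]
      exact h2
    have hgval : ∀ x, (Φ x).Dom → g x = charFun A x := by
      intro x h
      have : (Φ x).get h ∈ Φ x := Part.get_mem h
      have := hval x _ this
      simp only [hgdef, dif_pos h]
      exact this
    refine ⟨{x | (d x && decide (g x = 0)) = true},
      {x | (d x && decide (g x = 1)) = true}, ?_, ?_, ?_, ?_, ?_⟩
    · exact ComputablePred.computable_iff.2
        ⟨fun x => d x && decide (g x = 0),
          (Primrec.and.to_comp).comp hd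
            ((Primrec.eq.decide.to_comp).comp hgc (Computable.const 0)), rfl⟩
    · exact ComputablePred.computable_iff.2
        ⟨fun x => d x && decide (g x = 1),
          (Primrec.and.to_comp).comp hd
            ((Primrec.eq.decide.to_comp).comp hgc (Computable.const 1)), rfl⟩
    · intro x hx
      simp only [Set.mem_setOf_eq, Bool.and_eq_true, decide_eq_true_eq] at hx
      obtain ⟨hdx, hgx⟩ := hx
      have hD : (Φ x).Dom := (hdmem x).2 hdx
      have := hgval x hD
      intro hxA
      rw [this] at hgx
      simp [charFun, hxA] at hgx
    · intro x hx
      simp only [Set.mem_setOf_eq, Bool.and_eq_true, decide_eq_true_eq] at hx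
      obtain ⟨hdx, hgx⟩ := hx
      have hD : (Φ x).Dom := (hdmem x).2 hdx
      have := hgval x hD
      rw [this] at hgx
      by_contra hxA
      simp [charFun, hxA] at hgx
    · have hset : ({x | (d x && decide (g x = 0)) = true} ∪
          {x | (d x && decide (g x = 1)) = true}) = {x | (Φ x).Dom} := by
        ext x
        simp only [Set.mem_union, Set.mem_setOf_eq, Bool.and_eq_true,
          decide_eq_true_eq]
        constructor
        · rintro (⟨h, _⟩ | ⟨h, _⟩) <;> exact (hdmem x).2 h
        · intro h
          have hdx : d x = true := (hdmem x).1 h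
          have := hgval x h
          by_cases hxA : x ∈ A
          · exact Or.inr ⟨hdx, by simp [this, charFun, hxA]⟩
          · exact Or.inl ⟨hdx, by simp [this, charFun, hxA]⟩
      rw [hset]
      exact hdens
  · rintro ⟨C₀, C₁, h0, h1, hsub0, hsub1, hdens⟩
    obtain ⟨c₀, hc₀, hc₀eq⟩ := ComputablePred.computable_iff.1 h0
    obtain ⟨c₁, hc₁, hc₁eq⟩ := ComputablePred.computable_iff.1 h1
    have hm₀ : ∀ x, x ∈ C₀ ↔ c₀ x = true := fun x => (congrFun hc₀eq x).to_iff
    have hm₁ : ∀ x, x ∈ C₁ ↔ c₁ x = true := fun x => (congrFun hc₁eq x).to_iff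
    set Φ : ℕ →. ℕ := fun x =>
      bif c₁ x then Part.some 1 else bif c₀ x then Part.some 0 else Part.none
      with hΦdef
    have hΦ : Partrec Φ :=
      Partrec.cond hc₁ ((Computable.const 1).partrec)
        (Partrec.cond hc₀ ((Computable.const 0).partrec) Partrec.none)
    have hset : {x | (Φ x).Dom} = C₀ ∪ C₁ := by
      ext x
      simp only [Set.mem_setOf_eq, Set.mem_union, hm₀, hm₁, hΦdef]
      cases h1x : c₁ x <;> cases h0x : c₀ x <;> simp [h1x, h0x]
    refine ⟨Φ, hΦ, ⟨?_, ?_⟩, ?_⟩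
    · intro x m hm
      simp only [hΦdef] at hm
      cases h1x : c₁ x with
      | true =>
        rw [h1x] at hm
        simp only [cond_true, Part.mem_some_iff] at hm
        have : x ∈ A := hsub1 ((hm₁ x).2 h1x)
        simp [hm, charFun, this]
      | false =>
        rw [h1x] at hm
        cases h0x : c₀ x with
        | true =>
          rw [h0x] at hm
          simp only [cond_false, cond_true, Part.mem_some_iff] at hm
          have : x ∉ A := hsub0 ((hm₀ x).2 h0x)
          simp [hm, charFun, this]
        | false =>
          rw [h0x] at hm
          simp at hm
    · rw [hset]; exact hdens
    · rw [hset]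
      exact ComputablePred.computable_iff.2
        ⟨fun x => c₀ x || c₁ x,
          (Primrec.or.to_comp).comp hc₀ hc₁,
          by funext x; simp [Set.mem_union, hm₀, hm₁, Bool.or_eq_true]⟩
end

section
/- For all sets A, B ⊆ ℕ: A ≤_T B if and only if every set that is generically A-computable is generically B-computable (i.e. Ĝ(A) ⊆ Ĝ(B)). -/
open Filter

/-- `B` is generically `O`-computable: some partial function computable relative to
an oracle for `O` is a generic description of `B`. -/
def GenericallyComputableIn (O B : Set ℕ) : Prop :=
  ∃ Φ : ℕ →. ℕ, RecursiveInOracle (charFun O) Φ ∧ IsGenericDescription Φ B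
section Closure

variable {O : ℕ → ℕ}

theorem RecursiveInOracle.of_eq {f g : ℕ →. ℕ} (hf : RecursiveInOracle O f) (h : ∀ n, f n = g n) :
    RecursiveInOracle O g := (funext h : f = g) ▸ hf

theorem RecursiveInOracle.of_partrec {f : ℕ →. ℕ} (hf : Nat.Partrec f) : RecursiveInOracle O f := by
  induction hf with
  | zero => exact .zero
  | succ => exact .succ
  | left => exact .left
  | right => exact .right
  | pair _ _ ihf ihg => exact .pair ihf ihg
  | comp _ _ ihf ihg => exact .comp ihf ihg
  | prec _ _ ihf ihg => exact .prec ihf ihg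
  | rfind _ ihf => exact .rfind ihf

theorem RecursiveInOracle.of_partrec' {f : ℕ →. ℕ} (hf : Partrec f) : RecursiveInOracle O f :=
  RecursiveInOracle.of_partrec (Partrec.nat_iff.1 hf)

theorem RecursiveInOracle.of_computable {f : ℕ → ℕ} (hf : Computable f) :
    RecursiveInOracle O (fun n => Part.some (f n)) :=
  RecursiveInOracle.of_partrec' hf.partrec

/-- Composition on the right with a total computable function. -/
theorem RecursiveInOracle.comp_total {f : ℕ →. ℕ} {h : ℕ → ℕ} (hf : RecursiveInOracle O f)
    (hh : Computable h) : RecursiveInOracle O (fun n => f (h n)) :=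
  (RecursiveInOracle.comp hf (RecursiveInOracle.of_computable hh)).of_eq fun n => by
    exact Part.bind_some _ _

/-- Post-composition with a total computable function. -/
theorem RecursiveInOracle.total_comp {f : ℕ →. ℕ} {h : ℕ → ℕ} (hf : RecursiveInOracle O f)
    (hh : Computable h) : RecursiveInOracle O (fun n => (f n).map h) :=
  (RecursiveInOracle.comp (RecursiveInOracle.of_computable hh) hf).of_eq fun n => by
    exact Part.bind_some_eq_map h (f n)

theorem RecursiveInOracle.someId : RecursiveInOracle O (fun n => Part.some n) :=
  RecursiveInOracle.of_computable Computable.id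

end Closure
theorem RecursiveInOracle.trans {O O' : ℕ → ℕ} {f : ℕ →. ℕ} (hf : RecursiveInOracle O' f)
    (hO : RecursiveInOracle O (fun n => Part.some (O' n))) : RecursiveInOracle O f := by
  induction hf with
  | zero => exact .zero
  | succ => exact .succ
  | left => exact .left
  | right => exact .right
  | oracle => exact hO
  | pair _ _ ihf ihg => exact .pair ihf ihg
  | comp _ _ ihf ihg => exact .comp ihf ihg
  | prec _ _ ihf ihg => exact .prec ihf ihg
  | rfind _ ihf => exact .rfind ihf
theorem exists_bound_forall_le {P : ℕ → ℕ → Prop} :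
    ∀ y, (∀ m, m ≤ y → ∃ K, ∀ k, K ≤ k → P m k) →
      ∃ K, ∀ k, K ≤ k → ∀ m, m ≤ y → P m k := by
  intro y
  induction y with
  | zero =>
    intro h
    obtain ⟨K, hK⟩ := h 0 le_rfl
    exact ⟨K, fun k hk m hm => by simpa [Nat.le_zero.1 hm] using hK k hk⟩
  | succ y ih =>
    intro h
    obtain ⟨K₁, hK₁⟩ := ih fun m hm => h m (hm.trans (Nat.le_succ y))
    obtain ⟨K₂, hK₂⟩ := h (y + 1) le_rfl
    refine ⟨max K₁ K₂, fun k hk m hm => ?_⟩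
    rcases Nat.lt_succ_iff_lt_or_eq.1 (Nat.lt_succ_of_le hm) with h' | h'
    · exact hK₁ k (le_trans (le_max_left _ _) hk) m (Nat.lt_succ_iff.1 h')
    · subst h'; exact hK₂ k (le_trans (le_max_right _ _) hk)

theorem use_principle {O : ℕ → ℕ} {Φ : ℕ →. ℕ} (h : RecursiveInOracle O Φ) :
    ∃ F : List ℕ × ℕ →. ℕ, Partrec F ∧
      (∀ k n y, y ∈ F (List.map O (List.range k), n) → y ∈ Φ n) ∧
      (∀ n y, y ∈ Φ n → ∃ K, ∀ k, K ≤ k → y ∈ F (List.map O (List.range k), n)) := by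
  induction h with
  | zero =>
    refine ⟨fun _ => Part.some 0, (Computable.const 0).partrec, ?_, ?_⟩
    · intro k n y hy; exact hy
    · intro n y hy; exact ⟨0, fun k _ => hy⟩
  | succ =>
    refine ⟨fun p => Part.some (p.2 + 1), (Computable.succ.comp Computable.snd).partrec, ?_, ?_⟩
    · intro k n y hy; simpa using hy
    · intro n y hy; exact ⟨0, fun k _ => by simpa using hy⟩
  | left =>
    refine ⟨fun p => Part.some (Nat.unpair p.2).1,
      (Computable.fst.comp (Primrec.unpair.to_comp.comp Computable.snd)).partrec, ?_, ?_⟩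
    · intro k n y hy; simpa using hy
    · intro n y hy; exact ⟨0, fun k _ => by simpa using hy⟩
  | right =>
    refine ⟨fun p => Part.some (Nat.unpair p.2).2,
      (Computable.snd.comp (Primrec.unpair.to_comp.comp Computable.snd)).partrec, ?_, ?_⟩
    · intro k n y hy; simpa using hy
    · intro n y hy; exact ⟨0, fun k _ => by simpa using hy⟩
  | oracle =>
    refine ⟨fun p => Part.ofOption (p.1[p.2]?),
      Computable.ofOption (Computable.list_getElem?.comp Computable.fst Computable.snd), ?_, ?_⟩
    · intro k n y hy
      simp only [Part.mem_ofOption] at hy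
      rw [List.getElem?_map] at hy
      rcases Option.map_eq_some_iff.1 hy with ⟨m, hm, rfl⟩
      have hlt : n < k := by
        by_contra hge
        rw [List.getElem?_eq_none_iff.2 (by simpa using Nat.le_of_not_lt hge)] at hm
        cases hm
      rw [List.getElem?_range hlt] at hm
      cases hm
      simp
    · intro n y hy
      simp only [Part.mem_some_iff] at hy
      subst hy
      refine ⟨n + 1, fun k hk => ?_⟩
      simp only [Part.mem_ofOption]
      rw [List.getElem?_map, List.getElem?_range (Nat.lt_of_succ_le hk)]
      rfl
  | @pair f g hf hg ihf ihg =>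
    obtain ⟨Ff, hFf, soundf, complf⟩ := ihf
    obtain ⟨Fg, hFg, soundg, complg⟩ := ihg
    refine ⟨fun p => (Ff p).bind fun a => (Fg p).map (Nat.pair a),
      hFf.bind (((hFg.comp Computable.fst).map
        (((Primrec₂.natPair.to_comp).comp (Computable.snd.comp Computable.fst)
          Computable.snd).to₂)).to₂), ?_, ?_⟩
    · intro k n y hy
      simp only [Part.mem_bind_iff, Part.mem_map_iff] at hy
      obtain ⟨a, ha, b, hb, rfl⟩ := hy
      simp only [Seq.seq, Part.map_eq_map, Part.bind_eq_bind, Part.mem_bind_iff,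
        Part.mem_map_iff]
      exact ⟨_, ⟨a, soundf _ _ _ ha, rfl⟩, _, soundg _ _ _ hb, rfl⟩
    · intro n y hy
      simp only [Seq.seq, Part.map_eq_map, Part.bind_eq_bind, Part.mem_bind_iff,
        Part.mem_map_iff] at hy
      obtain ⟨_, ⟨a, ha, rfl⟩, b, hb, rfl⟩ := hy
      obtain ⟨K₁, hK₁⟩ := complf _ _ ha
      obtain ⟨K₂, hK₂⟩ := complg _ _ hb
      refine ⟨max K₁ K₂, fun k hk => ?_⟩
      simp only [Part.mem_bind_iff, Part.mem_map_iff]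
      exact ⟨a, hK₁ k (le_trans (le_max_left _ _) hk), b,
        hK₂ k (le_trans (le_max_right _ _) hk), rfl⟩
  | @comp f g hf hg ihf ihg =>
    obtain ⟨Ff, hFf, soundf, complf⟩ := ihf
    obtain ⟨Fg, hFg, soundg, complg⟩ := ihg
    refine ⟨fun p => (Fg p).bind fun m => Ff (p.1, m),
      hFg.bind ((hFf.comp (Computable.pair (Computable.fst.comp Computable.fst)
        Computable.snd)).to₂), ?_, ?_⟩
    · intro k n y hy
      simp only [Part.mem_bind_iff] at hy
      change y ∈ (g n).bind (fun m => f m)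
      rw [Part.mem_bind_iff]
      obtain ⟨m, hm, hy⟩ := hy
      exact ⟨m, soundg _ _ _ hm, soundf _ _ _ hy⟩
    · intro n y hy
      change y ∈ (g n).bind (fun m => f m) at hy
      rw [Part.mem_bind_iff] at hy
      obtain ⟨m, hm, hy⟩ := hy
      obtain ⟨K₁, hK₁⟩ := complg _ _ hm
      obtain ⟨K₂, hK₂⟩ := complf _ _ hy
      refine ⟨max K₁ K₂, fun k hk => ?_⟩
      simp only [Part.mem_bind_iff]
      exact ⟨m, hK₁ k (le_trans (le_max_left _ _) hk),
        hK₂ k (le_trans (le_max_right _ _) hk)⟩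
  | @prec f g hf hg ihf ihg =>
    obtain ⟨Ff, hFf, soundf, complf⟩ := ihf
    obtain ⟨Fg, hFg, soundg, complg⟩ := ihg
    have sound : ∀ (k a b y : ℕ),
        y ∈ (b.rec (Ff (List.map O (List.range k), a))
          (fun y IH => IH.bind fun i =>
            Fg (List.map O (List.range k), Nat.pair a (Nat.pair y i))) : Part ℕ) →
        y ∈ (b.rec (f a) (fun y IH => IH.bind fun i => g (Nat.pair a (Nat.pair y i))) :
          Part ℕ) := by
      intro k a b
      induction b with
      | zero => exact fun y hy => soundf _ _ _ hy
      | succ b ihb =>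
        intro y hy
        simp only [Part.mem_bind_iff] at hy ⊢
        obtain ⟨i, hi, hy⟩ := hy
        exact ⟨i, ihb i hi, soundg _ _ _ hy⟩
    have compl : ∀ (a b y : ℕ),
        y ∈ (b.rec (f a) (fun y IH => IH.bind fun i => g (Nat.pair a (Nat.pair y i))) :
          Part ℕ) →
        ∃ K, ∀ k, K ≤ k → y ∈ (b.rec (Ff (List.map O (List.range k), a))
          (fun y IH => IH.bind fun i =>
            Fg (List.map O (List.range k), Nat.pair a (Nat.pair y i))) : Part ℕ) := by
      intro a b
      induction b with
      | zero => exact fun y hy => complf _ _ hy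
      | succ b ihb =>
        intro y hy
        simp only [Part.mem_bind_iff] at hy
        obtain ⟨i, hi, hy⟩ := hy
        obtain ⟨K₁, hK₁⟩ := ihb i hi
        obtain ⟨K₂, hK₂⟩ := complg _ _ hy
        refine ⟨max K₁ K₂, fun k hk => ?_⟩
        simp only [Part.mem_bind_iff]
        exact ⟨i, hK₁ k (le_trans (le_max_left _ _) hk),
          hK₂ k (le_trans (le_max_right _ _) hk)⟩
    refine ⟨fun p => (Nat.unpair p.2).2.rec (Ff (p.1, (Nat.unpair p.2).1))
        (fun y IH => IH.bind fun i => Fg (p.1, Nat.pair (Nat.unpair p.2).1 (Nat.pair y i))),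
      ?_, ?_, ?_⟩
    · have hcf : Computable fun p : List ℕ × ℕ => (Nat.unpair p.2).2 :=
        Computable.snd.comp (Primrec.unpair.to_comp.comp Computable.snd)
      have hcg : Partrec fun p : List ℕ × ℕ => Ff (p.1, (Nat.unpair p.2).1) :=
        hFf.comp (Computable.pair Computable.fst
          (Computable.fst.comp (Primrec.unpair.to_comp.comp Computable.snd)))
      have hch : Partrec fun q : (List ℕ × ℕ) × (ℕ × ℕ) =>
          Fg (q.1.1, Nat.pair (Nat.unpair q.1.2).1 (Nat.pair q.2.1 q.2.2)) :=
        hFg.comp (Computable.pair (Computable.fst.comp Computable.fst)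
          ((Primrec₂.natPair.to_comp).comp
            ((Computable.fst.comp (Primrec.unpair.to_comp.comp Computable.snd)).comp
              Computable.fst)
            ((Primrec₂.natPair.to_comp).comp (Computable.fst.comp Computable.snd)
              (Computable.snd.comp Computable.snd))))
      exact Partrec.nat_rec hcf hcg hch.to₂
    · intro k n y hy
      have := sound k (Nat.unpair n).1 (Nat.unpair n).2 y (by exact hy)
      simpa [Nat.unpaired, Part.bind_eq_bind] using this
    · intro n y hy
      have hy' : y ∈ ((Nat.unpair n).2.rec (f (Nat.unpair n).1)
          (fun y IH => IH.bind fun i =>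
            g (Nat.pair (Nat.unpair n).1 (Nat.pair y i))) : Part ℕ) := by
        simpa [Nat.unpaired, Part.bind_eq_bind] using hy
      exact compl _ _ _ hy'
  | @rfind f hf ihf =>
    obtain ⟨Ff, hFf, soundf, complf⟩ := ihf
    refine ⟨fun p => Nat.rfind fun n => (fun m => m = 0) <$> Ff (p.1, Nat.pair p.2 n),
      ?_, ?_, ?_⟩
    · apply Partrec.rfind
      exact Partrec.to₂
        ((hFf.comp (Computable.pair (Computable.fst.comp Computable.fst)
          ((Primrec₂.natPair.to_comp).comp (Computable.snd.comp Computable.fst)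
            Computable.snd))).map
          (((Primrec.eq.comp Primrec.snd (Primrec.const 0)).decide.to_comp).to₂))
    · intro k n y hy
      have hspec := Nat.rfind_spec hy
      have hmin : ∀ m, m < y → false ∈ (fun m => decide (m = 0)) <$> Ff
          (List.map O (List.range k), Nat.pair n m) := fun m hm => Nat.rfind_min hy hm
      apply Nat.mem_rfind.2
      constructor
      · simp only [Part.map_eq_map, Part.mem_map_iff] at hspec ⊢
        obtain ⟨v, hv, hv0⟩ := hspec
        exact ⟨v, soundf _ _ _ hv, hv0⟩
      · intro m hm
        have := hmin m hm
        simp only [Part.map_eq_map, Part.mem_map_iff] at this ⊢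
        obtain ⟨v, hv, hv0⟩ := this
        exact ⟨v, soundf _ _ _ hv, hv0⟩
    · intro n y hy
      have hspec := Nat.rfind_spec hy
      have hmin : ∀ m, m < y → false ∈ (fun m => decide (m = 0)) <$> f (Nat.pair n m) :=
        fun m hm => Nat.rfind_min hy hm
      have key : ∀ m, m ≤ y → ∃ K, ∀ k, K ≤ k →
          ∃ v ∈ Ff (List.map O (List.range k), Nat.pair n m),
            (decide (v = 0)) = (decide (m = y)) := by
        intro m hm
        rcases eq_or_lt_of_le hm with rfl | hlt
        · simp only [Part.map_eq_map, Part.mem_map_iff] at hspec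
          obtain ⟨v, hv, hv0⟩ := hspec
          obtain ⟨K, hK⟩ := complf _ _ hv
          exact ⟨K, fun k hk => ⟨v, hK k hk, by simp_all⟩⟩
        · have := hmin m hlt
          simp only [Part.map_eq_map, Part.mem_map_iff] at this
          obtain ⟨v, hv, hv0⟩ := this
          obtain ⟨K, hK⟩ := complf _ _ hv
          exact ⟨K, fun k hk => ⟨v, hK k hk, by simp_all [Nat.ne_of_lt hlt]⟩⟩
      obtain ⟨K, hK⟩ := exists_bound_forall_le y key
      refine ⟨K, fun k hk => ?_⟩
      apply Nat.mem_rfind.2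
      constructor
      · obtain ⟨v, hv, hv0⟩ := hK k hk y le_rfl
        simp only [Part.map_eq_map, Part.mem_map_iff]
        exact ⟨v, hv, by simpa using hv0⟩
      · intro m hm
        obtain ⟨v, hv, hv0⟩ := hK k hk m (le_of_lt hm)
        simp only [Part.map_eq_map, Part.mem_map_iff]
        exact ⟨v, hv, by simpa [Nat.ne_of_lt hm] using hv0⟩
theorem hasDensity_ne_zero : HasDensity {x : ℕ | x ≠ 0} 1 := by
  have h1 : Filter.Tendsto (fun n : ℕ => 1 - 1 / ((n : ℝ) + 1)) atTop (nhds 1) := by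
    simpa using (tendsto_const_nhds (x := (1:ℝ))).sub (tendsto_one_div_add_atTop_nhds_zero_nat (𝕜 := ℝ))
  apply h1.congr
  intro n
  have hne : ((n : ℝ) + 1) ≠ 0 := by positivity
  rw [partialDensity]
  have he : ((Finset.range (n + 1)).filter (· ∈ {x : ℕ | x ≠ 0}))
      = (Finset.range (n + 1)).erase 0 := by
    ext x; simp [and_comm]
  rw [Finset.filter_congr_decidable, he, Finset.card_erase_of_mem (by simp),
    Finset.card_range]
  field_simp
  simp

theorem Rset_unique {m j k : ℕ} (hj : m ∈ Rset j) (hk : m ∈ Rset k) : j = k := by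
  rcases lt_trichotomy j k with h | h | h
  · exact absurd (dvd_trans (pow_dvd_pow 2 (Nat.succ_le_of_lt h)) hk.1) hj.2
  · exact h
  · exact absurd (dvd_trans (pow_dvd_pow 2 (Nat.succ_le_of_lt h)) hj.1) hk.2

theorem mem_RofSet_iff {A : Set ℕ} {m k : ℕ} (hm : m ∈ Rset k) :
    m ∈ RofSet A ↔ k ∈ A := by
  constructor
  · intro h
    obtain ⟨n, hn, hmn⟩ := by simpa [RofSet] using h
    rwa [Rset_unique hm hmn]
  · intro h
    exact Set.mem_biUnion h hm

theorem charFun_RofSet {A : Set ℕ} {m k : ℕ} (hm : m ∈ Rset k) :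
    charFun (RofSet A) m = charFun A k := by
  rw [charFun, charFun]
  by_cases h : k ∈ A
  · rw [if_pos ((mem_RofSet_iff hm).2 h), if_pos h]
  · rw [if_neg (fun hh => h ((mem_RofSet_iff hm).1 hh)), if_neg h]

theorem gci_RofSet (A : Set ℕ) : GenericallyComputableIn A (RofSet A) := by
  classical
  set p : ℕ → ℕ →. Bool := fun n k => Part.some (!(n % 2 ^ (k + 1) == 0)) with hp
  set Φ₀ : ℕ →. ℕ :=
    fun n => (Nat.rfind (p n)) >>= fun k => Part.some (charFun A k) with hΦ₀
  have ptrue : ∀ n k, (true ∈ p n k) ↔ ¬ 2 ^ (k + 1) ∣ n := by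
    intro n k
    simp [hp, Nat.dvd_iff_mod_eq_zero, eq_comm (a := true)]
  have pfalse : ∀ n k, (false ∈ p n k) ↔ 2 ^ (k + 1) ∣ n := by
    intro n k
    simp [hp, Nat.dvd_iff_mod_eq_zero, eq_comm (a := false)]
  have hrfmem : ∀ n k, k ∈ Nat.rfind (p n) → n ∈ Rset k := by
    intro n k hk
    have h1 : ¬ 2 ^ (k + 1) ∣ n := (ptrue n k).1 (Nat.rfind_spec hk)
    have h2 : 2 ^ k ∣ n := by
      cases k with
      | zero => exact one_dvd n
      | succ j =>
        exact (pfalse n j).1 (Nat.rfind_min hk (Nat.lt_succ_self j))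
    exact ⟨h2, h1⟩
  refine ⟨Φ₀, ?_, ?_, ?_⟩
  · -- computability
    have hc : Computable fun q : ℕ × ℕ => (!(q.1 % 2 ^ (q.2 + 1) == 0)) := by
      have hpow : Primrec₂ (· ^ · : ℕ → ℕ → ℕ) := Primrec₂.unpaired'.mp Nat.Primrec.pow
      exact Primrec.to_comp (Primrec.not.comp (Primrec.beq.comp
        (Primrec.nat_mod.comp Primrec.fst
          (hpow.comp (Primrec.const 2) (Primrec.succ.comp Primrec.snd)))
        (Primrec.const 0)))
    have hrf : Partrec fun n => Nat.rfind (p n) := Partrec.rfind hc.partrec.to₂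
    exact RecursiveInOracle.comp RecursiveInOracle.oracle (RecursiveInOracle.of_partrec' hrf)
  · -- correctness
    intro x m hm
    simp only [hΦ₀, Part.bind_eq_bind, Part.mem_bind_iff, Part.mem_some_iff] at hm
    obtain ⟨k, hk, rfl⟩ := hm
    exact (charFun_RofSet (hrfmem x k hk)).symm
  · -- density
    have hset : {x : ℕ | (Φ₀ x).Dom} = {x : ℕ | x ≠ 0} := by
      ext x
      simp only [Set.mem_setOf_eq]
      constructor
      · intro hdom
        obtain ⟨m, hm⟩ := Part.dom_iff_mem.1 hdom
        simp only [hΦ₀, Part.bind_eq_bind, Part.mem_bind_iff] at hm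
        obtain ⟨k, hk, -⟩ := hm
        intro hx
        subst hx
        exact (hrfmem 0 k hk).2 (dvd_zero _)
      · intro hx
        have hwit : true ∈ p x x := by
          rw [ptrue]
          intro hdvd
          have hle := Nat.le_of_dvd (Nat.pos_of_ne_zero hx) hdvd
          have := Nat.lt_two_pow_self (n := x)
          omega
        have hdom : (Nat.rfind (p x)).Dom :=
          Nat.rfind_dom.2 ⟨x, hwit, fun {m} _ => trivial⟩
        obtain ⟨k, hk⟩ := Part.dom_iff_mem.1 hdom
        apply Part.dom_iff_mem.2
        refine ⟨charFun A k, ?_⟩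
        simp only [hΦ₀, Part.bind_eq_bind, Part.mem_bind_iff, Part.mem_some_iff]
        exact ⟨k, hk, rfl⟩
    rw [hset]
    exact hasDensity_ne_zero
theorem exists_mem_Rset_dom {D : Set ℕ} (hD : HasDensity D 1) (n : ℕ) :
    ∃ m, m ∈ Rset n ∧ m ∈ D := by
  classical
  by_contra hcon
  push_neg at hcon
  set c : ℕ := 2 ^ (n + 1) with hc
  have h2n : 2 ^ n * 2 = c := by rw [hc]; ring
  have h2npos : 0 < 2 ^ n := Nat.pow_pos (by norm_num)
  have hc2 : 2 ≤ c := by omega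
  have hcR : (1 : ℝ) - (c : ℝ)⁻¹ < 1 := by
    have h : (0 : ℝ) < (c : ℝ)⁻¹ := by positivity
    linarith
  have hev := hD.eventually (eventually_gt_nhds hcR)
  obtain ⟨N₀, hN₀⟩ := eventually_atTop.1 hev
  set t : ℕ := N₀ + 1 with ht
  set N : ℕ := c * t - 1 with hN
  have hct : 2 * t ≤ c * t := Nat.mul_le_mul_right t hc2
  have hN1 : N + 1 = c * t := Nat.sub_add_cancel (by omega)
  have hNge : N₀ ≤ N := by omega
  set S := (Finset.range t).image (fun i => c * i + 2 ^ n) with hS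
  have hcard_S : S.card = t := by
    rw [hS, Finset.card_image_of_injective _ ?_, Finset.card_range]
    intro a b hab
    simp only at hab
    have := Nat.add_right_cancel hab
    exact Nat.eq_of_mul_eq_mul_left (by omega) this
  have hSsub : S ⊆ Finset.range (N + 1) := by
    intro m hm
    rw [hS, Finset.mem_image] at hm
    obtain ⟨i, hi, rfl⟩ := hm
    rw [Finset.mem_range, hN1]
    rw [Finset.mem_range] at hi
    calc c * i + 2 ^ n < c * i + c := by omega
      _ = c * (i + 1) := by ring
      _ ≤ c * t := Nat.mul_le_mul_left c (by omega)
  have hSR : ∀ m ∈ S, m ∈ Rset n := by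
    intro m hm
    rw [hS, Finset.mem_image] at hm
    obtain ⟨i, hi, rfl⟩ := hm
    constructor
    · exact ⟨2 * i + 1, by rw [← h2n]; ring⟩
    · rw [← hc]
      intro hdvd
      have hdvd' : c ∣ 2 ^ n := (Nat.dvd_add_right (Dvd.intro i rfl)).1 hdvd
      have := Nat.le_of_dvd h2npos hdvd'
      omega
  have hsub2 : (Finset.range (N + 1)).filter (· ∈ D) ⊆ Finset.range (N + 1) \ S := by
    intro x hx
    rw [Finset.mem_filter] at hx
    exact Finset.mem_sdiff.2 ⟨hx.1, fun hxS => hcon x (hSR x hxS) hx.2⟩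
  have hcard_le : ((Finset.range (N + 1)).filter (· ∈ D)).card ≤ (N + 1) - t :=
    calc ((Finset.range (N + 1)).filter (· ∈ D)).card
        ≤ (Finset.range (N + 1) \ S).card := Finset.card_le_card hsub2
      _ = (N + 1) - t := by rw [Finset.card_sdiff_of_subset hSsub, Finset.card_range, hcard_S]
  have hub : partialDensity D N ≤ 1 - (c : ℝ)⁻¹ := by
    rw [partialDensity, Finset.filter_congr_decidable]
    have hpos : (0 : ℝ) < (N : ℝ) + 1 := by positivity
    have hcast : ((N : ℝ) + 1) = ((c * t : ℕ) : ℝ) := by rw [← hN1]; push_cast; ring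
    have htle : t ≤ c * t := by omega
    have hle : (((Finset.range (N + 1)).filter (· ∈ D)).card : ℝ) ≤ ((N : ℝ) + 1) - t := by
      rw [hcast]
      calc (((Finset.range (N + 1)).filter (· ∈ D)).card : ℝ)
          ≤ (((N + 1) - t : ℕ) : ℝ) := by exact_mod_cast hcard_le
        _ = ((c * t : ℕ) : ℝ) - t := by rw [hN1, Nat.cast_sub htle]
    calc (((Finset.range (N + 1)).filter (· ∈ D)).card : ℝ) / ((N : ℝ) + 1)
        ≤ (((N : ℝ) + 1) - t) / ((N : ℝ) + 1) := (div_le_div_iff_of_pos_right hpos).2 hle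
      _ = 1 - (c : ℝ)⁻¹ := by
          rw [hcast]
          have hcne : (c : ℝ) ≠ 0 := by positivity
          have htne : (t : ℝ) ≠ 0 := Nat.cast_ne_zero.2 (by omega)
          push_cast
          field_simp
  exact absurd (hN₀ N hNge) (not_lt.2 hub)
theorem recIn_sigma {O : ℕ → ℕ} :
    RecursiveInOracle O (fun k => Part.some (Encodable.encode (List.map O (List.range k)))) := by
  classical
  set gstep : ℕ →. ℕ := fun x => Part.some (Encodable.encode
    ((O ((Nat.unpair (Nat.unpair x).2).1)) ::
      (Denumerable.ofNat (List ℕ) ((Nat.unpair (Nat.unpair x).2).2)))) with hgstep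
  have c_up1 : Computable fun z : ℕ => (Nat.unpair z).1 :=
    Computable.fst.comp Primrec.unpair.to_comp
  have c_up2 : Computable fun z : ℕ => (Nat.unpair z).2 :=
    Computable.snd.comp Primrec.unpair.to_comp
  have hg : RecursiveInOracle O gstep := by
    have h1 : RecursiveInOracle O (fun x => Part.some (O ((Nat.unpair (Nat.unpair x).2).1))) :=
      RecursiveInOracle.comp_total (f := fun n => Part.some (O n)) RecursiveInOracle.oracle (c_up1.comp c_up2)
    have hpair : RecursiveInOracle O (fun x =>
        Nat.pair <$> Part.some x <*> Part.some (O ((Nat.unpair (Nat.unpair x).2).1))) :=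
      RecursiveInOracle.pair RecursiveInOracle.someId h1
    have hpair' : RecursiveInOracle O
        (fun x => Part.some (Nat.pair x (O ((Nat.unpair (Nat.unpair x).2).1)))) :=
      hpair.of_eq fun x => by simp [Seq.seq]
    have ht : Computable (fun z : ℕ => Encodable.encode ((Nat.unpair z).2
        :: (Denumerable.ofNat (List ℕ) ((Nat.unpair ((Nat.unpair ((Nat.unpair z).1)).2)).2)))) :=
      Computable.encode.comp (Computable.list_cons.comp c_up2
        ((Computable.ofNat (List ℕ)).comp (c_up2.comp (c_up2.comp c_up1))))
    refine (RecursiveInOracle.comp (RecursiveInOracle.of_partrec' ht.partrec) hpair').of_eq fun x => ?_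
    simp [hgstep, Nat.unpair_pair]
    exact (Part.bind_some _ _).trans (by simp [PFun.coe_val, Nat.unpair_pair])
  have hprec := RecursiveInOracle.prec
    (RecursiveInOracle.of_computable (Computable.const (Encodable.encode ([] : List ℕ)))) hg
  have hml : RecursiveInOracle O (fun k => (Nat.unpaired fun a n =>
      n.rec (Part.some (Encodable.encode ([] : List ℕ)))
        (fun y IH => IH >>= fun i => gstep (Nat.pair a (Nat.pair y i)))) (Nat.pair 0 k)) := by
    refine RecursiveInOracle.comp_total ?_ (Primrec₂.natPair.to_comp.comp
      (Computable.const 0) Computable.id)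
    refine hprec.of_eq fun x => ?_
    rfl
  have heval : ∀ k, (Nat.unpaired fun a n =>
      n.rec (Part.some (Encodable.encode ([] : List ℕ)))
        (fun y IH => IH >>= fun i => gstep (Nat.pair a (Nat.pair y i)))) (Nat.pair 0 k)
      = Part.some (Encodable.encode ((List.map O (List.range k)).reverse)) := by
    intro k
    induction k with
    | zero => simp [Nat.unpaired]
    | succ k ih =>
      simp only [Nat.unpaired, Nat.unpair_pair] at ih ⊢
      show (Nat.rec _ _ k : Part ℕ) >>= _ = _
      rw [show (Nat.rec (motive := fun _ => Part ℕ)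
        (Part.some (Encodable.encode ([] : List ℕ)))
        (fun y IH => IH >>= fun i => gstep (Nat.pair 0 (Nat.pair y i))) k : Part ℕ)
          = Part.some (Encodable.encode ((List.map O (List.range k)).reverse)) from ih]
      simp only [Part.bind_eq_bind, Part.bind_some, hgstep, Nat.unpair_pair,
        Denumerable.ofNat_encode]
      rw [List.range_succ]
      simp
  have hrev : RecursiveInOracle O
      (fun k => Part.some (Encodable.encode ((List.map O (List.range k)).reverse))) :=
    hml.of_eq heval
  have hfin := RecursiveInOracle.total_comp hrev
    (Computable.encode.comp ((Primrec.list_reverse.to_comp).comp (Computable.ofNat (List ℕ))))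
  refine hfin.of_eq fun k => ?_
  simp [Denumerable.ofNat_encode]
set_option maxHeartbeats 1600000
open Nat.Partrec.Code in
theorem turing_of_gci {A B : Set ℕ}
    (H : GenericallyComputableIn B (RofSet A)) : TuringReducibleSet A B := by
  classical
  obtain ⟨Φ, hΦrec, hcorr, hdom⟩ := H
  obtain ⟨F, hF, sound, compl⟩ := use_principle hΦrec
  have c_up1 : Computable fun z : ℕ => (Nat.unpair z).1 :=
    Computable.fst.comp Primrec.unpair.to_comp
  have c_up2 : Computable fun z : ℕ => (Nat.unpair z).2 :=
    Computable.snd.comp Primrec.unpair.to_comp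
  have hfNpr : Partrec (fun x : ℕ =>
      F (Denumerable.ofNat (List ℕ) (Nat.unpair x).1, (Nat.unpair x).2)) :=
    hF.comp (Computable.pair ((Computable.ofNat (List ℕ)).comp c_up1) c_up2)
  obtain ⟨c, hc⟩ := exists_code.1 (Partrec.nat_iff.1 hfNpr)
  set σe : ℕ → ℕ := fun k => Encodable.encode (List.map (charFun B) (List.range k)) with hσe
  have heval : ∀ k m, eval c (Nat.pair (σe k) m)
      = F (List.map (charFun B) (List.range k), m) := by
    intro k m
    rw [hc]
    simp [hσe, Nat.unpair_pair, Denumerable.ofNat_encode]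
  -- the total test function:  z = pair (pair n (pair (pair k d) m)) e
  set T : ℕ → ℕ := fun z =>
    if ((Nat.unpair (Nat.unpair z).1).2.unpair.2 % 2 ^ ((Nat.unpair (Nat.unpair z).1).1) = 0)
      ∧ ¬((Nat.unpair (Nat.unpair z).1).2.unpair.2 %
          2 ^ ((Nat.unpair (Nat.unpair z).1).1 + 1) = 0)
      ∧ (evaln ((Nat.unpair ((Nat.unpair (Nat.unpair z).1).2.unpair.1)).2) c
          (Nat.pair ((Nat.unpair z).2)
            ((Nat.unpair (Nat.unpair z).1).2.unpair.2))).isSome = true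
    then 0 else 1 with hT
  have hTcomp : Computable T := by
    have hpow : Primrec₂ (· ^ · : ℕ → ℕ → ℕ) := Primrec₂.unpaired'.mp Nat.Primrec.pow
    have pu1 : Primrec fun z : ℕ => (Nat.unpair z).1 := Primrec.fst.comp Primrec.unpair
    have pu2 : Primrec fun z : ℕ => (Nat.unpair z).2 := Primrec.snd.comp Primrec.unpair
    have pn : Primrec fun z : ℕ => (Nat.unpair (Nat.unpair z).1).1 := pu1.comp pu1
    have ps : Primrec fun z : ℕ => (Nat.unpair (Nat.unpair z).1).2 := pu2.comp pu1
    have pm : Primrec fun z : ℕ => ((Nat.unpair (Nat.unpair z).1).2.unpair).2 := pu2.comp ps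
    have pd : Primrec fun z : ℕ =>
        (Nat.unpair ((Nat.unpair (Nat.unpair z).1).2.unpair).1).2 := pu2.comp (pu1.comp ps)
    have hp1 : PrimrecPred fun z : ℕ =>
        ((Nat.unpair (Nat.unpair z).1).2.unpair.2 % 2 ^ ((Nat.unpair (Nat.unpair z).1).1) = 0) :=
      Primrec.eq.comp (Primrec.nat_mod.comp pm (hpow.comp (Primrec.const 2) pn))
        (Primrec.const 0)
    have hp2 : PrimrecPred fun z : ℕ =>
        ¬((Nat.unpair (Nat.unpair z).1).2.unpair.2 %
          2 ^ ((Nat.unpair (Nat.unpair z).1).1 + 1) = 0) :=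
      PrimrecPred.not (Primrec.eq.comp (Primrec.nat_mod.comp pm
        (hpow.comp (Primrec.const 2) (Primrec.succ.comp pn))) (Primrec.const 0))
    have pev : Primrec fun z : ℕ =>
        evaln ((Nat.unpair ((Nat.unpair (Nat.unpair z).1).2.unpair.1)).2) c
          (Nat.pair ((Nat.unpair z).2) ((Nat.unpair (Nat.unpair z).1).2.unpair.2)) :=
      primrec_evaln.comp (Primrec.pair (Primrec.pair pd (Primrec.const c))
        (Primrec₂.natPair.comp pu2 pm))
    have hp3 : PrimrecPred fun z : ℕ =>
        ((evaln ((Nat.unpair ((Nat.unpair (Nat.unpair z).1).2.unpair.1)).2) c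
          (Nat.pair ((Nat.unpair z).2)
            ((Nat.unpair (Nat.unpair z).1).2.unpair.2))).isSome = true) :=
      Primrec.eq.comp (Primrec.option_isSome.comp pev) (Primrec.const true)
    exact (Primrec.ite (hp1.and (hp2.and hp3)) (Primrec.const 0) (Primrec.const 1)).to_comp
  -- the searched partial function
  set f_in : ℕ →. ℕ := fun x =>
    (Nat.pair <$> Part.some x <*>
      Part.some (σe ((Nat.unpair ((Nat.unpair (Nat.unpair x).2).1)).1))) >>=
      fun z => Part.some (T z) with hf_in
  have hfin : RecursiveInOracle (charFun B) f_in := by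
    refine RecursiveInOracle.comp (RecursiveInOracle.of_computable hTcomp)
      (RecursiveInOracle.pair RecursiveInOracle.someId
        (RecursiveInOracle.comp_total (f := fun k => Part.some (σe k)) recIn_sigma
          (c_up1.comp (c_up1.comp (c_up2)))))
  have hfeq : ∀ n s, f_in (Nat.pair n s) =
      Part.some (T (Nat.pair (Nat.pair n s) (σe ((Nat.unpair (Nat.unpair s).1).1)))) := by
    intro n s
    simp [hf_in, Seq.seq, Nat.unpair_pair]
  have hR := RecursiveInOracle.rfind hfin
  -- the extraction function:  z = pair s e,  s = pair (pair k d) m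
  set E : ℕ → ℕ := fun z =>
    (evaln ((Nat.unpair ((Nat.unpair (Nat.unpair z).1).1)).2) c
      (Nat.pair ((Nat.unpair z).2) ((Nat.unpair (Nat.unpair z).1).2))).getD 0 with hE
  have hEcomp : Computable E := by
    have pu1 : Primrec fun z : ℕ => (Nat.unpair z).1 := Primrec.fst.comp Primrec.unpair
    have pu2 : Primrec fun z : ℕ => (Nat.unpair z).2 := Primrec.snd.comp Primrec.unpair
    have pev : Primrec fun z : ℕ =>
        evaln ((Nat.unpair ((Nat.unpair (Nat.unpair z).1).1)).2) c
          (Nat.pair ((Nat.unpair z).2) ((Nat.unpair (Nat.unpair z).1).2)) :=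
      primrec_evaln.comp (Primrec.pair (Primrec.pair (pu2.comp (pu1.comp pu1))
        (Primrec.const c)) (Primrec₂.natPair.comp pu2 (pu2.comp pu1)))
    exact (Primrec.option_getD.comp pev (Primrec.const 0)).to_comp
  set ext : ℕ →. ℕ := fun s =>
    (Nat.pair <$> Part.some s <*> Part.some (σe ((Nat.unpair (Nat.unpair s).1).1))) >>=
      fun z => Part.some (E z) with hext
  have hextrec : RecursiveInOracle (charFun B) ext :=
    RecursiveInOracle.comp (RecursiveInOracle.of_computable hEcomp)
      (RecursiveInOracle.pair RecursiveInOracle.someId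
        (RecursiveInOracle.comp_total (f := fun k => Part.some (σe k)) recIn_sigma
          (c_up1.comp c_up1)))
  have hexeq : ∀ s, ext s =
      Part.some (E (Nat.pair s (σe ((Nat.unpair (Nat.unpair s).1).1)))) := by
    intro s
    simp [hext, Seq.seq, Nat.unpair_pair]
  have hΨ := RecursiveInOracle.comp hextrec hR
  -- final correctness
  have key : ∀ n, ((fun a => Nat.rfind fun s => (fun m => m = 0) <$> f_in (Nat.pair a s)) n
      >>= ext) = Part.some (charFun A n) := by
    intro n
    set p : ℕ →. Bool := fun s => (fun m => m = 0) <$> f_in (Nat.pair n s) with hp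
    have ptotal : ∀ s, p s = Part.some (decide
        (T (Nat.pair (Nat.pair n s) (σe ((Nat.unpair (Nat.unpair s).1).1))) = 0)) := by
      intro s
      simp only [hp]
      rw [hfeq n s]
      simp
    apply Part.eq_some_iff.2
    -- termination witness
    obtain ⟨m, hmR, hmD⟩ := exists_mem_Rset_dom hdom n
    obtain ⟨y, hy⟩ := Part.dom_iff_mem.1 (by exact hmD)
    obtain ⟨K, hK⟩ := compl m y hy
    have hyeval : y ∈ eval c (Nat.pair (σe K) m) := by
      rw [heval]; exact hK K le_rfl
    obtain ⟨d, hd⟩ := evaln_complete.1 hyeval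
    have hTs₀ : T (Nat.pair (Nat.pair n (Nat.pair (Nat.pair K d) m)) (σe K)) = 0 := by
      have h1 : m % 2 ^ n = 0 := Nat.dvd_iff_mod_eq_zero.mp hmR.1
      have h2 : ¬ m % 2 ^ (n + 1) = 0 := fun hmod => hmR.2 (Nat.dvd_iff_mod_eq_zero.mpr hmod)
      have h3 : (evaln d c (Nat.pair (σe K) m)).isSome = true := by
        rw [Option.isSome_iff_exists]
        exact ⟨y, hd⟩
      rw [hT]
      simp only [Nat.unpair_pair]
      rw [if_pos ⟨h1, h2, h3⟩]
    have htr : true ∈ p (Nat.pair (Nat.pair K d) m) := by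
      rw [ptotal]
      simp only [Nat.unpair_pair, hTs₀]
      simp
    have hdomR : (Nat.rfind p).Dom :=
      Nat.rfind_dom.2 ⟨_, htr, fun {j} _ => by rw [ptotal]; trivial⟩
    obtain ⟨s, hs⟩ := Part.dom_iff_mem.1 hdomR
    -- analyze the found witness
    have hTs : T (Nat.pair (Nat.pair n s) (σe ((Nat.unpair (Nat.unpair s).1).1))) = 0 := by
      have := Nat.rfind_spec hs
      rw [ptotal] at this
      simpa using this
    set ks := (Nat.unpair (Nat.unpair s).1).1 with hks
    set ds := (Nat.unpair (Nat.unpair s).1).2 with hds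
    set ms := (Nat.unpair s).2 with hms
    rw [hT] at hTs
    simp only [Nat.unpair_pair] at hTs
    rw [← hds, ← hms] at hTs
    have hcond : (ms % 2 ^ n = 0) ∧ ¬(ms % 2 ^ (n + 1) = 0) ∧
        (evaln ds c (Nat.pair (σe ks) ms)).isSome = true := by
      by_contra hnc
      rw [if_neg hnc] at hTs
      exact one_ne_zero hTs
    obtain ⟨h1, h2, h3⟩ := hcond
    obtain ⟨ys, hys⟩ := Option.isSome_iff_exists.1 h3
    have hysev : ys ∈ eval c (Nat.pair (σe ks) ms) := evaln_sound hys
    rw [heval] at hysev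
    have hysΦ : ys ∈ Φ ms := sound ks ms ys hysev
    have hmsR : ms ∈ Rset n :=
      ⟨Nat.dvd_iff_mod_eq_zero.mpr h1, fun hdvd => h2 (Nat.dvd_iff_mod_eq_zero.mp hdvd)⟩
    have hval : ys = charFun A n := (hcorr ms ys hysΦ).trans (charFun_RofSet hmsR)
    -- assemble membership
    rw [Part.bind_eq_bind, Part.mem_bind_iff]
    refine ⟨s, hs, ?_⟩
    change charFun A n ∈ ext s
    rw [hexeq s]
    rw [hE]
    simp only [Nat.unpair_pair]
    rw [← hks, ← hds, ← hms, hys]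
    simp [hval]
  exact hΨ.of_eq key
/-- `A ≤_T B` iff `Ĝ(A) ⊆ Ĝ(B)`. -/
theorem stmt18 (A B : Set ℕ) :
    TuringReducibleSet A B ↔
      ∀ C : Set ℕ, GenericallyComputableIn A C → GenericallyComputableIn B C := by
  constructor
  · rintro hAB C ⟨Φ, hrec, hdesc⟩
    exact ⟨Φ, hrec.trans hAB, hdesc⟩
  · intro H
    exact turing_of_gci (H (RofSet A) (gci_RofSet A))
end
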